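/- arXiv:1310.2475 — 3 statements merged into one kernel-verified Lean document; each statement's English description precedes it below -/
import Mathlib

section
/- Let G be a finite digraph on n nodes, let i be a node of G and γ ≥ 1 an integer. Then the cycle removal threshold of the single-node subgraph {i} satisfies T_cr^γ({i}) ≤ (γ−1)·ĉ(G) + (γ+1)·cd(G), where ĉ(G) is the circumference and cd(G) the cab driver's diameter of G. Concretely: every walk W from a node a to a node b passing through i, with l(W) > (γ−1)·ĉ(G) + (γ+1)·cd(G), admits a walk V from a to b passing through i, obtained from W by removing cycles, with l(V) ≡ l(W) (mod γ) and l(V) ≤ (γ−1)·ĉ(G) + (γ+1)·cd(G). -/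
open Classical

noncomputable section

namespace MaxPlus

/-- A square matrix over the max-plus semiring `ℝmax = ℝ ∪ {-∞}`,
represented as `WithBot ℝ` (with `⊥ = -∞`, `+` the usual addition). -/
abbrev MPMat (n : ℕ) := Fin n → Fin n → WithBot ℝ

variable {n : ℕ}

/-- Max-plus matrix multiplication: `(A⊗B)_{ij} = max_k (a_{ik} + b_{kj})`. -/
def mpMul (A B : MPMat n) : MPMat n := fun i j => Finset.univ.sup fun k => A i k + B k j

/-- Max-plus matrix power, with `A^0` the max-plus identity. -/
def mpPow (A : MPMat n) : ℕ → MPMat n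
  | 0 => fun i j => if i = j then (0 : WithBot ℝ) else ⊥
  | t + 1 => mpMul A (mpPow A t)

/-- Max-plus matrix-vector product. -/
def mpMulVec (A : MPMat n) (x : Fin n → WithBot ℝ) : Fin n → WithBot ℝ :=
  fun i => Finset.univ.sup fun k => A i k + x k

/-- A digraph on the node set `{1,…,n}`: a set of vertices together with an
edge relation. -/
structure SubD (n : ℕ) where
  verts : Set (Fin n)
  edge : Fin n → Fin n → Prop

/-- The weighted digraph `𝒟(A)` of a max-plus matrix: all `n` nodes, with an
edge `(i,j)` whenever `a_{ij} ≠ -∞`. -/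
def digr (A : MPMat n) : SubD n := ⟨Set.univ, fun i j => A i j ≠ ⊥⟩

/-- `W` (a nonempty list of nodes) is a walk in the digraph `G`. -/
def IsWalkIn (G : SubD n) (W : List (Fin n)) : Prop :=
  W ≠ [] ∧ (∀ v ∈ W, v ∈ G.verts) ∧ W.Chain' G.edge

/-- The length of a walk: its number of edges (number of nodes minus one). -/
def elen (W : List (Fin n)) : ℕ := W.length - 1

/-- The weight `p(W)` of a walk: sum of the weights of its edges. -/
def walkWeight (A : MPMat n) (W : List (Fin n)) : WithBot ℝ :=
  ((W.zip W.tail).map fun p => A p.1 p.2).sum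

/-- `W` is a cycle in `G`: a nonempty closed walk with pairwise distinct
nodes (apart from the repeated endpoint). -/
def IsCycleIn (G : SubD n) (W : List (Fin n)) : Prop :=
  IsWalkIn G W ∧ 2 ≤ W.length ∧ W.head? = W.getLast? ∧ W.dropLast.Nodup

/-- `W` is a path in `G`: a walk with no repeated node. -/
def IsPathIn (G : SubD n) (W : List (Fin n)) : Prop :=
  IsWalkIn G W ∧ W.Nodup

/-- `v` is reachable from `u` by a (possibly empty) walk in `G`. -/
def ReachIn (G : SubD n) (u v : Fin n) : Prop :=
  ∃ W, IsWalkIn G W ∧ W.head? = some u ∧ W.getLast? = some v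

/-- `u` and `v` lie in the same strongly connected component of `G`. -/
def SccEq (G : SubD n) (u v : Fin n) : Prop := ReachIn G u v ∧ ReachIn G v u

/-- The node set of the s.c.c. of `u` in `G`. -/
def sccOf (G : SubD n) (u : Fin n) : Set (Fin n) := {v | SccEq G u v}

/-- The s.c.c. of `u` in `G`, as a digraph. -/
def sccSub (G : SubD n) (u : Fin n) : SubD n :=
  ⟨sccOf G u, fun a b => G.edge a b ∧ a ∈ sccOf G u ∧ b ∈ sccOf G u⟩

/-- `H` is a subgraph of `G`. -/
def SubLE (H G : SubD n) : Prop := H.verts ⊆ G.verts ∧ ∀ u v, H.edge u v → G.edge u v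

/-- `G` is completely reducible: there are no edges between distinct s.c.c.'s,
i.e. every edge lies inside an s.c.c. -/
def CompletelyReducible (G : SubD n) : Prop := ∀ u v, G.edge u v → ReachIn G v u

/-- `G` has no trivial s.c.c.: every node lies on a cycle of `G`. -/
def NoTrivialScc (G : SubD n) : Prop := ∀ v ∈ G.verts, ∃ W, IsCycleIn G W ∧ v ∈ W

/-- `A` is irreducible: `𝒟(A)` is strongly connected. -/
def IrreducibleMat (A : MPMat n) : Prop := ∀ i j : Fin n, ReachIn (digr A) i j

/-- `W` is a closed walk at node `v` in `G`. -/
def IsClosedWalkAt (G : SubD n) (v : Fin n) (W : List (Fin n)) : Prop :=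
  IsWalkIn G W ∧ W.head? = some v ∧ W.getLast? = some v

/-- The greatest common divisor of a set of naturals (0 for the empty set). -/
def setGcd (S : Set ℕ) : ℕ :=
  sInf {d | (∀ s ∈ S, d ∣ s) ∧ ∀ e, (∀ s ∈ S, e ∣ s) → e ∣ d}

/-- The least common multiple of a set of naturals: the least positive common
multiple (0 if there is none). -/
def setLcm (S : Set ℕ) : ℕ := sInf {m | 0 < m ∧ ∀ s ∈ S, s ∣ m}

/-- The cyclicity of the s.c.c. of `v` in `G`: the gcd of the lengths of the
closed walks of `G` through `v` (0 if `v` lies on no nonempty closed walk). -/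
def sccCyclicity (G : SubD n) (v : Fin n) : ℕ :=
  setGcd {l | 0 < l ∧ ∃ W, IsClosedWalkAt G v W ∧ elen W = l}

/-- The cyclicity of a digraph: the lcm of the cyclicities of its
(nontrivial) s.c.c.'s. -/
def graphCyclicity (G : SubD n) : ℕ :=
  setLcm {c | ∃ v ∈ G.verts, c = sccCyclicity G v ∧ 0 < c}

/-- The walk `W` has mean weight `m`, i.e. `p(W) = l(W)·m` (finitely). -/
def meanIs (A : MPMat n) (W : List (Fin n)) (m : ℝ) : Prop :=
  walkWeight A W = (((elen W : ℝ) * m : ℝ) : WithBot ℝ)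

/-- `lam` is the maximum cycle mean `λ(A)` of `A`: it is the mean of some
cycle of `𝒟(A)` and no cycle has a larger mean.  (Its existence is
equivalent to `𝒟(A)` containing a cycle, i.e. `λ(A) ≠ -∞`.) -/
def IsMaxCycleMean (A : MPMat n) (lam : ℝ) : Prop :=
  (∃ W, IsCycleIn (digr A) W ∧ meanIs A W lam) ∧
  ∀ W m, IsCycleIn (digr A) W → meanIs A W m → m ≤ lam

/-- The set of critical nodes: nodes on some cycle of mean `λ(A)`. -/
def critNodes (A : MPMat n) (lam : ℝ) : Set (Fin n) :=
  {v | ∃ W, IsCycleIn (digr A) W ∧ meanIs A W lam ∧ v ∈ W}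

/-- Critical edges: edges of some cycle of mean `λ(A)`. -/
def critEdges (A : MPMat n) (lam : ℝ) (u v : Fin n) : Prop :=
  ∃ W, IsCycleIn (digr A) W ∧ meanIs A W lam ∧ (u, v) ∈ W.zip W.tail

/-- The critical graph `𝒞(A)`. -/
def critSub (A : MPMat n) (lam : ℝ) : SubD n := ⟨critNodes A lam, critEdges A lam⟩

/-- Add the real constant `c` to every entry. -/
def shiftMat (A : MPMat n) (c : ℝ) : MPMat n := fun i j => A i j + (c : WithBot ℝ)

/-- The max-plus Kleene star `X^* = I ⊕ X ⊕ X² ⊕ ⋯` (entrywise supremum). -/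
def mpStar (X : MPMat n) : MPMat n := fun i j => ⨆ t : ℕ, mpPow X t i j

/-- The matrix `M = (((-λ)⊗A)^{γ(𝒢)})^*` used to define the CSR terms. -/
def csrM (A : MPMat n) (lam : ℝ) (G : SubD n) : MPMat n :=
  mpStar (mpPow (shiftMat A (-lam)) (graphCyclicity G))

/-- The `C` term of the CSR expansion of `A` w.r.t. the subgraph `G`. -/
def csrC (A : MPMat n) (lam : ℝ) (G : SubD n) : MPMat n :=
  fun i j => if j ∈ G.verts then csrM A lam G i j else ⊥

/-- The `R` term of the CSR expansion of `A` w.r.t. the subgraph `G`. -/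
def csrR (A : MPMat n) (lam : ℝ) (G : SubD n) : MPMat n :=
  fun i j => if i ∈ G.verts then csrM A lam G i j else ⊥

/-- The `S` term of the CSR expansion of `A` w.r.t. the subgraph `G`. -/
def csrS (A : MPMat n) (lam : ℝ) (G : SubD n) : MPMat n :=
  fun i j => if G.edge i j then A i j + ((-lam : ℝ) : WithBot ℝ) else ⊥

/-- The matrix `C S^t R`. -/
def csr (A : MPMat n) (lam : ℝ) (G : SubD n) (t : ℕ) : MPMat n :=
  mpMul (mpMul (csrC A lam G) (mpPow (csrS A lam G) t)) (csrR A lam G)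

/-- `G` is a representing subgraph of the critical graph `crit`: a completely
reducible subgraph (with no trivial s.c.c.) such that every s.c.c. of `crit`
contains exactly one s.c.c. of `G`. -/
structure IsRepresenting (crit G : SubD n) : Prop where
  le : SubLE G crit
  compRed : CompletelyReducible G
  noTriv : NoTrivialScc G
  covers : ∀ u ∈ crit.verts, ∃ v ∈ G.verts, SccEq crit u v
  unique : ∀ v ∈ G.verts, ∀ w ∈ G.verts, SccEq crit v w → SccEq G v w

/-- `B` is subordinate to `A`: obtained from `A` by setting some entries to `-∞`. -/
def Subordinate (B A : MPMat n) : Prop := ∀ i j, B i j = A i j ∨ B i j = ⊥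

/-- Set to `-∞` all entries in the rows and columns indexed by `S`. -/
def zeroRC (A : MPMat n) (S : Set (Fin n)) : MPMat n :=
  fun i j => if i ∈ S ∨ j ∈ S then ⊥ else A i j

/-- The Nachtigall scheme: zero out the rows and columns of critical nodes. -/
def bN (A : MPMat n) (lam : ℝ) : MPMat n := zeroRC A (critNodes A lam)

/-- `V` is a max-balancing of `A`: `V = D⁻¹((-λ(A))⊗A)D` with all entries `≤ 0`,
entries `0` on critical edges, and every edge of `𝒟(V)` lies on a cycle all of
whose edges have weight at least that of the given edge (cycle cover). -/
def IsMaxBalancing (A : MPMat n) (lam : ℝ) (V : MPMat n) : Prop :=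
  (∃ d : Fin n → ℝ, ∀ i j, V i j = A i j + ((d j - d i - lam : ℝ) : WithBot ℝ)) ∧
  (∀ i j, V i j ≤ (0 : WithBot ℝ)) ∧
  (∀ i j, critEdges A lam i j → V i j = (0 : WithBot ℝ)) ∧
  (∀ i j, V i j ≠ ⊥ →
    ∃ W, IsCycleIn (digr V) W ∧ (i, j) ∈ W.zip W.tail ∧ ∀ p ∈ W.zip W.tail, V i j ≤ V p.1 p.2)

/-- The Hartmann-Arguelles threshold graph `Θ^{ha}(μ)`: induced by the edges
with `v_{ij} ≥ μ`; by convention `Θ^{ha}(-∞) = 𝒟(A)`. -/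
def thrHA (A V : MPMat n) (μ : WithBot ℝ) : SubD n :=
  if μ = ⊥ then digr A
  else ⟨{u | ∃ w, μ ≤ V u w ∨ μ ≤ V w u}, fun u v => μ ≤ V u v⟩

/-- The cycle threshold graph `Θ^{ct}(μ)`: induced by all nodes and edges of
cycles of mean weight `≥ μ`; by convention `Θ^{ct}(-∞) = 𝒟(A)`. -/
def thrCT (A : MPMat n) (μ : WithBot ℝ) : SubD n :=
  if μ = ⊥ then digr A
  else ⟨{v | ∃ W m, IsCycleIn (digr A) W ∧ meanIs A W m ∧ μ ≤ (m : WithBot ℝ) ∧ v ∈ W},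
        fun u v => ∃ W m, IsCycleIn (digr A) W ∧ meanIs A W m ∧ μ ≤ (m : WithBot ℝ) ∧
          (u, v) ∈ W.zip W.tail⟩

/-- `Θ` has an s.c.c. containing no s.c.c. of `crit`. -/
def HasFreeScc (Θ crit : SubD n) : Prop :=
  ∃ u ∈ Θ.verts, ¬ ∃ w ∈ crit.verts, sccOf crit w ⊆ sccOf Θ u

/-- `μ` is the greatest value `≤ λ(A)` satisfying `P` (or `-∞` if there is
no such value). -/
def IsThrMax (P : WithBot ℝ → Prop) (lam : ℝ) (μ : WithBot ℝ) : Prop :=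
  (μ ≤ (lam : WithBot ℝ) ∧ P μ ∧ ∀ μ', μ' ≤ (lam : WithBot ℝ) → P μ' → μ' ≤ μ) ∨
  (μ = ⊥ ∧ ∀ μ', μ' ≤ (lam : WithBot ℝ) → ¬ P μ')

/-- `μ = μ^{ha}` for the max-balancing `V` of `A`. -/
def IsMuHA (A : MPMat n) (lam : ℝ) (V : MPMat n) (μ : WithBot ℝ) : Prop :=
  IsThrMax (fun m => HasFreeScc (thrHA A V m) (critSub A lam)) lam μ

/-- `μ = μ^{ct}` for `A`. -/
def IsMuCT (A : MPMat n) (lam : ℝ) (μ : WithBot ℝ) : Prop :=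
  IsThrMax (fun m => HasFreeScc (thrCT A m) (critSub A lam)) lam μ

/-- The union of the s.c.c.'s of `Θ` intersecting the node set `crit`. -/
def unionSccMeeting (Θ : SubD n) (crit : Set (Fin n)) : Set (Fin n) :=
  {v | v ∈ Θ.verts ∧ ∃ w ∈ crit, SccEq Θ v w}

/-- The node set `𝒢^{ha}` of the Hartmann-Arguelles scheme. -/
def haNodes (A V : MPMat n) (lam : ℝ) (μ : WithBot ℝ) : Set (Fin n) :=
  unionSccMeeting (thrHA A V μ) (critNodes A lam)

/-- The matrix `B^{HA}` of the Hartmann-Arguelles scheme. -/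
def bHA (A V : MPMat n) (lam : ℝ) (μ : WithBot ℝ) : MPMat n :=
  zeroRC A (haNodes A V lam μ)

/-- The node set `𝒢^{ct}` of the cycle threshold scheme. -/
def ctNodes (A : MPMat n) (lam : ℝ) (μ : WithBot ℝ) : Set (Fin n) :=
  unionSccMeeting (thrCT A μ) (critNodes A lam)

/-- The matrix `B^{ct}` of the cycle threshold scheme. -/
def bCT (A : MPMat n) (lam : ℝ) (μ : WithBot ℝ) : MPMat n :=
  zeroRC A (ctNodes A lam μ)

/-- The graph `𝒢^{ct}`: the union of the s.c.c.'s of `Θ^{ct}(μ^{ct})`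
intersecting `𝒞(A)`, as a digraph. -/
def ctSub (A : MPMat n) (lam : ℝ) (μ : WithBot ℝ) : SubD n :=
  ⟨ctNodes A lam μ,
   fun u v => (thrCT A μ).edge u v ∧ u ∈ ctNodes A lam μ ∧ v ∈ ctNodes A lam μ⟩

/-- The circumference of `G`: the greatest length of a cycle of `G`. -/
def circumf (G : SubD n) : ℕ := sSup {l | ∃ W, IsCycleIn G W ∧ W.length = l + 1}

/-- The cab driver's diameter of `G`: the greatest length of a path of `G`. -/
def cabDiam (G : SubD n) : ℕ := sSup {l | ∃ W, IsPathIn G W ∧ W.length = l + 1}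

/-- The girth of the s.c.c. of `v` in `G`: the least length of a cycle lying
in the s.c.c. of `v`. -/
def sccGirth (G : SubD n) (v : Fin n) : ℕ :=
  sInf {l | 0 < l ∧ ∃ W, IsCycleIn G W ∧ W.length = l + 1 ∧ ∀ u ∈ W, SccEq G v u}

/-- The max-girth of `G`: the greatest girth of an s.c.c. of `G`. -/
def maxGirth (G : SubD n) : ℕ := sSup {g | ∃ v ∈ G.verts, 0 < g ∧ g = sccGirth G v}

/-- The max-cyclicity of `G`: the greatest cyclicity of an s.c.c. of `G`. -/
def maxCyclicity (G : SubD n) : ℕ := sSup {c | ∃ v ∈ G.verts, 0 < c ∧ c = sccCyclicity G v}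

/-- The Wielandt number: `Wi(n) = (n-1)² + 1` for `n > 1`, `Wi(1) = 0`. -/
def wielandt (k : ℕ) : ℕ := if k ≤ 1 then 0 else (k - 1) ^ 2 + 1

/-- The set of finite entries of `A`. -/
def finEntries (A : MPMat n) : Set ℝ := {x | ∃ i j, A i j = (x : WithBot ℝ)}

/-- The least finite entry of `A`. -/
def minEnt (A : MPMat n) : ℝ := sInf (finEntries A)

/-- The greatest finite entry of `A`. -/
def maxEnt (A : MPMat n) : ℝ := sSup (finEntries A)

/-- `‖A‖`: the difference between the greatest and least finite entries. -/
def matNorm (A : MPMat n) : ℝ := maxEnt A - minEnt A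

/-- `n_B`: the size of the smallest square submatrix of `B` containing all
finite entries of `B`. -/
def nB (B : MPMat n) : ℕ := Set.ncard {i | ∃ j, B i j ≠ ⊥ ∨ B j i ≠ ⊥}

/-- `‖v‖`: the difference between the greatest and least entries of `v`. -/
def vecNorm (v : Fin n → ℝ) : ℝ := sSup (Set.range v) - sInf (Set.range v)

/-- The exploration penalty `ep^γ(i)` (w.r.t. the graph `crit`): the least `T`
such that for every multiple `t` of `γ` with `t ≥ T` there is a closed walk of
length `t` at `i` in `crit`. -/
def epAt (crit : SubD n) (γ : ℕ) (i : Fin n) : ℕ :=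
  sInf {T | ∀ t, γ ∣ t → T ≤ t → ∃ W, IsClosedWalkAt crit i W ∧ elen W = t}

/-- The exploration penalty `ep^γ(S)`: the maximum of `ep^γ(i)` over `i ∈ S`. -/
def epOn (crit : SubD n) (γ : ℕ) (S : Set (Fin n)) : ℕ := sSup {e | ∃ i ∈ S, e = epAt crit γ i}

/-- `ep(𝒞(A))`: the maximum over the s.c.c.'s `𝒞_l` of `crit` of
`ep^{γ(𝒞_l)}(𝒞_l)`. -/
def epCrit (crit : SubD n) : ℕ :=
  sSup {e | ∃ i ∈ crit.verts, e = epAt crit (sccCyclicity crit i) i}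

/-- The weak CSR expansion `A^t = λ^{⊗t}⊗(CS^tR) ⊕ B^t` holds at time `t`
(with CSR terms taken w.r.t. the subgraph `G`). -/
def weakCSReq (A B : MPMat n) (lam : ℝ) (G : SubD n) (t : ℕ) : Prop :=
  ∀ i j, mpPow A t i j = max (csr A lam G t i j + (((t : ℝ) * lam : ℝ) : WithBot ℝ)) (mpPow B t i j)

/-- The domination `λ^{⊗t}⊗(CS^tR) ≥ B^t` holds at time `t`. -/
def T2eq (A B : MPMat n) (lam : ℝ) (G : SubD n) (t : ℕ) : Prop :=
  ∀ i j, mpPow B t i j ≤ csr A lam G t i j + (((t : ℝ) * lam : ℝ) : WithBot ℝ)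

/-- The domination `λ^{⊗t}⊗(CS^tRv) ≥ B^t v` holds at time `t`. -/
def T2veq (A B : MPMat n) (lam : ℝ) (G : SubD n) (v : Fin n → ℝ) (t : ℕ) : Prop :=
  ∀ i, mpMulVec (mpPow B t) (fun j => (v j : WithBot ℝ)) i
      ≤ mpMulVec (csr A lam G t) (fun j => (v j : WithBot ℝ)) i + (((t : ℝ) * lam : ℝ) : WithBot ℝ)

/-- One step of removing a (nonempty) closed subwalk from a walk. -/
def RemoveStep (W V : List (Fin n)) : Prop :=
  ∃ (pre mid post : List (Fin n)) (x : Fin n),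
    W = pre ++ x :: mid ++ x :: post ∧ V = pre ++ x :: post

/-- One step of inserting a cycle of `C` into a walk (at an occurrence of a
node of that cycle). -/
def InsertStep (C : SubD n) (W V : List (Fin n)) : Prop :=
  ∃ (pre post mid : List (Fin n)) (x : Fin n),
    W = pre ++ x :: post ∧ V = pre ++ x :: mid ++ x :: post ∧ IsCycleIn C (x :: mid ++ [x])

/-- `V` is obtained from `W` by removing cycles. -/
def RemOnly : List (Fin n) → List (Fin n) → Prop := Relation.ReflTransGen RemoveStep

/-- `V` is obtained from `W` by removing cycles and possibly inserting cycles
of `C`. -/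
def RemIns (C : SubD n) : List (Fin n) → List (Fin n) → Prop :=
  Relation.ReflTransGen fun W V => RemoveStep W V ∨ InsertStep C W V

/-- `V` is obtained from `W` by removing at least one cycle and possibly
inserting cycles of `C`. -/
def RemInsStrict (C : SubD n) (W V : List (Fin n)) : Prop :=
  ∃ W₁ W₂, RemIns C W W₁ ∧ RemoveStep W₁ W₂ ∧ RemIns C W₂ V

/-- `T` witnesses the cycle removal threshold `T_cr^γ(C) ≤ T` in the digraph
`G`: every walk of `G` through `C` of length `≥ T` can be reduced (removing
cycles, possibly inserting cycles of `C`) to a walk through `C` with the same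
endpoints, the same length mod `γ`, and length `≤ T`. -/
def TcrProp (G C : SubD n) (γ T : ℕ) : Prop :=
  ∀ W, IsWalkIn G W → (∃ v ∈ C.verts, v ∈ W) → T ≤ elen W →
    ∃ V, RemIns C W V ∧ IsWalkIn G V ∧ (∃ v ∈ C.verts, v ∈ V) ∧
      V.head? = W.head? ∧ V.getLast? = W.getLast? ∧ elen V ≡ elen W [MOD γ] ∧ elen V ≤ T

/-- `T` witnesses the strict cycle removal threshold `T̃_cr^γ(C) ≤ T`. -/
def TcrStrictProp (G C : SubD n) (γ T : ℕ) : Prop :=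
  ∀ W, IsWalkIn G W → (∃ v ∈ C.verts, v ∈ W) → T ≤ elen W →
    ∃ V, RemInsStrict C W V ∧ IsWalkIn G V ∧ (∃ v ∈ C.verts, v ∈ V) ∧
      V.head? = W.head? ∧ V.getLast? = W.getLast? ∧ elen V ≡ elen W [MOD γ] ∧ elen V ≤ T

/-- The cycle removal threshold `T_cr^γ(C)` of the subgraph `C` in `G`. -/
def Tcr (G C : SubD n) (γ : ℕ) : ℕ := sInf {T | TcrProp G C γ T}

/-- The strict cycle removal threshold `T̃_cr^γ(C)` of the subgraph `C` in `G`. -/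
def TcrStrict (G C : SubD n) (γ : ℕ) : ℕ := sInf {T | TcrStrictProp G C γ T}

/-- The subgraph formed by the nodes and edges of the walk `W`. -/
def cycleSub (W : List (Fin n)) : SubD n :=
  ⟨{v | v ∈ W}, fun a b => (a, b) ∈ W.zip W.tail⟩

/-- The single-node subgraph `{i}` (with no edges). -/
def singleSub (i : Fin n) : SubD n := ⟨{i}, fun _ _ => False⟩

/-- `λ(M)` as an element of `ℝmax` (`-∞` if `𝒟(M)` has no cycle). -/
def lamW (M : MPMat n) : WithBot ℝ :=
  sSup {x : WithBot ℝ | ∃ W m, IsCycleIn (digr M) W ∧ meanIs M W m ∧ x = (m : WithBot ℝ)}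

end MaxPlus

namespace MaxPlus


section CycleRemovalAux

variable {n : ℕ} {G : SubD n}

private lemma getLast?_append_cons' {α : Type*} (l t : List α) (y : α) :
    (l ++ y :: t).getLast? = (y :: t).getLast? := by
  rw [List.getLast?_append]
  obtain ⟨a, ha⟩ := Option.isSome_iff_exists.mp (List.getLast?_isSome.mpr (List.cons_ne_nil y t))
  rw [ha]
  rfl

private lemma removeStep_head? {W V : List (Fin n)} (h : RemoveStep W V) :
    V.head? = W.head? := by
  obtain ⟨pre, mid, post, x, rfl, rfl⟩ := h
  simp [List.head?_append]

private lemma removeStep_getLast? {W V : List (Fin n)} (h : RemoveStep W V) :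
    V.getLast? = W.getLast? := by
  obtain ⟨pre, mid, post, x, rfl, rfl⟩ := h
  rw [getLast?_append_cons' pre post x]
  rw [show pre ++ x :: mid ++ x :: post = (pre ++ x :: mid) ++ x :: post by simp,
    getLast?_append_cons']

private lemma removeStep_walk {W V : List (Fin n)} (h : RemoveStep W V)
    (hW : IsWalkIn G W) : IsWalkIn G V := by
  obtain ⟨pre, mid, post, x, rfl, rfl⟩ := h
  obtain ⟨hne, hv, hc⟩ := hW
  refine ⟨by simp, ?_, ?_⟩
  · intro v hv'
    apply hv
    simp at hv' ⊢
    tauto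
  · unfold List.Chain' at hc ⊢
    rw [List.isChain_append] at hc ⊢
    obtain ⟨h1, h2, h3⟩ := hc
    rw [List.isChain_append] at h1
    refine ⟨h1.1, h2, ?_⟩
    intro a ha y hy
    simp at hy
    subst hy
    exact h1.2.2 a ha x (by simp)

private lemma remOnly_walk {W V : List (Fin n)} (h : RemOnly W V)
    (hW : IsWalkIn G W) : IsWalkIn G V := by
  induction h with
  | refl => exact hW
  | tail _ hstep ih => exact removeStep_walk hstep ih

private lemma remOnly_head? {W V : List (Fin n)} (h : RemOnly W V) :
    V.head? = W.head? := by
  induction h with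
  | refl => rfl
  | tail _ hstep ih => rw [removeStep_head? hstep, ih]

private lemma remOnly_getLast? {W V : List (Fin n)} (h : RemOnly W V) :
    V.getLast? = W.getLast? := by
  induction h with
  | refl => rfl
  | tail _ hstep ih => rw [removeStep_getLast? hstep, ih]

private lemma removeStep_append_right {W V : List (Fin n)} (h : RemoveStep W V)
    (Z : List (Fin n)) : RemoveStep (W ++ Z) (V ++ Z) := by
  obtain ⟨pre, mid, post, x, rfl, rfl⟩ := h
  exact ⟨pre, mid, post ++ Z, x, by simp, by simp⟩

private lemma removeStep_append_left {W V : List (Fin n)} (h : RemoveStep W V)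
    (Z : List (Fin n)) : RemoveStep (Z ++ W) (Z ++ V) := by
  obtain ⟨pre, mid, post, x, rfl, rfl⟩ := h
  exact ⟨Z ++ pre, mid, post, x, by simp, by simp⟩

private lemma remOnly_append_right {W V : List (Fin n)} (h : RemOnly W V)
    (Z : List (Fin n)) : RemOnly (W ++ Z) (V ++ Z) :=
  Relation.ReflTransGen.lift (fun l => l ++ Z)
    (fun _ _ hs => removeStep_append_right hs Z) _ _ h

private lemma remOnly_append_left {W V : List (Fin n)} (h : RemOnly W V)
    (Z : List (Fin n)) : RemOnly (Z ++ W) (Z ++ V) :=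
  Relation.ReflTransGen.lift (fun l => Z ++ l)
    (fun _ _ hs => removeStep_append_left hs Z) _ _ h

private lemma exists_first_occ {α : Type*} {a : α} :
    ∀ {l : List α}, a ∈ l → ∃ s t, l = s ++ a :: t ∧ a ∉ s := by
  intro l
  induction l with
  | nil => simp
  | cons b u ih =>
    intro h
    by_cases hab : a = b
    · exact ⟨[], u, by simp [hab], by simp⟩
    · have hau : a ∈ u := by
        rcases List.mem_cons.mp h with h' | h'
        · exact absurd h' hab
        · exact h'
      obtain ⟨s, t, rfl, hns⟩ := ih hau
      exact ⟨b :: s, t, by simp, by simp [hab, hns]⟩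

private lemma exists_first_dup {α : Type*} :
    ∀ {l : List α}, ¬ l.Nodup →
      ∃ pre x mid suf, l = pre ++ x :: mid ++ x :: suf ∧ (pre ++ x :: mid).Nodup := by
  intro l
  induction l with
  | nil => intro h; exact absurd List.nodup_nil h
  | cons y t ih =>
    intro h
    by_cases ht : t.Nodup
    · have hy : y ∈ t := by
        by_contra hy
        exact h (List.nodup_cons.mpr ⟨hy, ht⟩)
      obtain ⟨m, s, rfl, hnm⟩ := exists_first_occ hy
      refine ⟨[], y, m, s, by simp, ?_⟩
      simpa using List.nodup_cons.mpr ⟨hnm, ht.of_append_left⟩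
    · obtain ⟨pre, x, mid, suf, heq, hnd⟩ := ih ht
      by_cases hy : y ∈ pre ++ x :: mid
      · obtain ⟨m, s, hsplit, hym⟩ := exists_first_occ hy
        refine ⟨[], y, m, s ++ x :: suf, ?_, ?_⟩
        · rw [heq, hsplit]
          simp
        · rw [hsplit] at hnd
          simpa using List.nodup_cons.mpr ⟨hym, hnd.of_append_left⟩
      · refine ⟨y :: pre, x, mid, suf, by simp [heq], ?_⟩
        simpa using List.nodup_cons.mpr ⟨hy, hnd⟩

private lemma cycle_elen_le_circumf {W : List (Fin n)} (h : IsCycleIn G W) :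
    elen W ≤ circumf G := by
  have hne : W ≠ [] := h.1.1
  have hpos : 0 < W.length := List.length_pos_iff.mpr hne
  have hlen : W.length = elen W + 1 := by
    show W.length = W.length - 1 + 1
    omega
  refine le_csSup ⟨n, ?_⟩ ⟨W, h, hlen⟩
  rintro l ⟨W', hc, hl⟩
  have hnd : W'.dropLast.Nodup := hc.2.2.2
  have hcard := hnd.length_le_card
  rw [List.length_dropLast, Fintype.card_fin] at hcard
  omega

private lemma path_elen_le_cabDiam {W : List (Fin n)} (h : IsPathIn G W) :
    elen W ≤ cabDiam G := by
  have hne : W ≠ [] := h.1.1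
  have hpos : 0 < W.length := List.length_pos_iff.mpr hne
  have hlen : W.length = elen W + 1 := by
    show W.length = W.length - 1 + 1
    omega
  refine le_csSup ⟨n, ?_⟩ ⟨W, h, hlen⟩
  rintro l ⟨W', hc, hl⟩
  have hcard := hc.2.length_le_card
  rw [Fintype.card_fin] at hcard
  omega

private lemma length_le_sum : ∀ {l : List ℕ}, (∀ c ∈ l, 1 ≤ c) → l.length ≤ l.sum := by
  intro l
  induction l with
  | nil => simp
  | cons a t ih =>
    intro h
    have h1 := h a (by simp)
    have h2 := ih (fun c hc => h c (by simp [hc]))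
    simp only [List.length_cons, List.sum_cons]
    omega

private lemma decompose (G : SubD n) :
    ∀ (m : ℕ) (L : List (Fin n)), L.length ≤ m → IsWalkIn G L →
      ∃ cs : List ℕ,
        (∀ c ∈ cs, 1 ≤ c ∧ c ≤ circumf G) ∧
        L.length ≤ (circumf G + cabDiam G) * cs.length + cabDiam G + 1 ∧
        ∀ a t : ℕ, ∃ V : List (Fin n), RemOnly L V ∧
          V.length + ((cs.drop a).take t).sum = L.length := by
  intro m
  induction m with
  | zero =>
    intro L hL hw
    exact absurd (List.eq_nil_of_length_eq_zero (Nat.le_zero.mp hL)) hw.1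
  | succ m ih =>
    intro L hL hw
    by_cases hnd : L.Nodup
    · refine ⟨[], by simp, ?_, fun a t => ⟨L, Relation.ReflTransGen.refl, by simp⟩⟩
      have h1 : elen L ≤ cabDiam G := path_elen_le_cabDiam ⟨hw, hnd⟩
      have h2 : 0 < L.length := List.length_pos_iff.mpr hw.1
      have h3 : elen L = L.length - 1 := rfl
      simp only [List.length_nil, Nat.mul_zero, Nat.zero_add]
      omega
    · obtain ⟨pre, x, mid, suf, heq, hnd2⟩ := exists_first_dup hnd
      have hLlen : L.length = pre.length + (mid.length + 1) + (suf.length + 1) := by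
        rw [heq]; simp; omega
      have hinfix_cyc : (x :: mid ++ [x]) <:+: L := ⟨pre, suf, by rw [heq]; simp⟩
      have hcyc : IsCycleIn G (x :: mid ++ [x]) := by
        refine ⟨⟨by simp, ?_, hw.2.2.infix hinfix_cyc⟩, by simp, ?_, ?_⟩
        · intro v hv
          exact hw.2.1 v (hinfix_cyc.subset hv)
        · rw [List.getLast?_concat]
          simp
        · rw [List.dropLast_concat]
          exact hnd2.of_append_right
      have hc1 : mid.length + 1 ≤ circumf G := by
        have h := cycle_elen_le_circumf hcyc
        have : elen (x :: mid ++ [x]) = mid.length + 1 := by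
          show (x :: mid ++ [x]).length - 1 = mid.length + 1
          simp
        omega
      have hsub : (pre ++ [x]).Sublist (pre ++ x :: mid) :=
        (List.cons_sublist_cons.mpr (List.nil_sublist mid)).append_left pre
      have hpath : IsPathIn G (pre ++ [x]) := by
        refine ⟨⟨by simp, ?_, hw.2.2.infix ⟨[], mid ++ x :: suf, by rw [heq]; simp⟩⟩,
          List.Nodup.sublist hsub hnd2⟩
        intro v hv
        apply hw.2.1
        rw [heq]
        simp at hv ⊢
        tauto
      have hpre : pre.length ≤ cabDiam G := by
        have h := path_elen_le_cabDiam hpath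
        have : elen (pre ++ [x]) = pre.length := by
          show (pre ++ [x]).length - 1 = pre.length
          simp
        omega
      have hwsuf : IsWalkIn G (x :: suf) := by
        refine ⟨by simp, ?_, hw.2.2.infix ⟨pre ++ x :: mid, [], by rw [heq]; simp⟩⟩
        intro v hv
        apply hw.2.1
        rw [heq]
        simp at hv ⊢
        tauto
      have hlen' : (x :: suf).length ≤ m := by
        simp only [List.length_cons]
        omega
      obtain ⟨cs', hcs'e, hcs'b, plan'⟩ := ih (x :: suf) hlen' hwsuf
      refine ⟨(mid.length + 1) :: cs', ?_, ?_, ?_⟩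
      · intro c hc
        rcases List.mem_cons.mp hc with rfl | hc'
        · exact ⟨by omega, hc1⟩
        · exact hcs'e c hc'
      · simp only [List.length_cons, Nat.mul_succ]
        have hx : (x :: suf).length = suf.length + 1 := by simp
        rw [hx] at hcs'b
        have := hcs'b
        nlinarith [hpre, hc1, hcs'b]
      · intro a t
        match a, t with
        | 0, 0 => exact ⟨L, Relation.ReflTransGen.refl, by simp⟩
        | 0, (s+1) =>
          obtain ⟨V', hr', hl'⟩ := plan' 0 s
          refine ⟨pre ++ V', ?_, ?_⟩
          · exact Relation.ReflTransGen.head ⟨pre, mid, suf, x, heq, rfl⟩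
              (remOnly_append_left hr' pre)
          · simp only [List.drop_zero, List.take_succ_cons, List.sum_cons,
              List.length_append] at hl' ⊢
            simp only [List.length_cons] at hl'
            omega
        | (a'+1), t =>
          obtain ⟨V', hr', hl'⟩ := plan' a' t
          refine ⟨(pre ++ x :: mid) ++ V', ?_, ?_⟩
          · have hL2 : L = (pre ++ x :: mid) ++ (x :: suf) := by rw [heq]
            rw [hL2]
            exact remOnly_append_left hr' _
          · simp only [List.drop_succ_cons, List.length_append, List.length_cons] at hl' ⊢
            omega

private lemma round_step {γ : ℕ} (hγ : 1 ≤ γ) {i : Fin n} {W : List (Fin n)}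
    (hW : IsWalkIn G W) (hiW : i ∈ W)
    (hT : (γ - 1) * circumf G + (γ + 1) * cabDiam G < elen W) :
    ∃ V, RemOnly W V ∧ IsWalkIn G V ∧ i ∈ V ∧ V.head? = W.head? ∧
      V.getLast? = W.getLast? ∧ elen V ≡ elen W [MOD γ] ∧ elen V < elen W := by
  obtain ⟨g, rfl⟩ := Nat.exists_eq_add_of_le hγ
  obtain ⟨P, Q, rfl⟩ := List.append_of_mem hiW
  have hg1 : 1 + g - 1 = g := by omega
  have hg2 : 1 + g + 1 = g + 2 := by omega
  rw [hg1, hg2] at hT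
  have helenW : elen (P ++ i :: Q) = P.length + Q.length := by
    show (P ++ i :: Q).length - 1 = P.length + Q.length
    simp
  have hW1 : IsWalkIn G (P ++ [i]) := by
    refine ⟨by simp, ?_, hW.2.2.infix ⟨[], Q, by simp⟩⟩
    intro v hv
    apply hW.2.1
    simp at hv ⊢
    tauto
  have hW2 : IsWalkIn G (i :: Q) := by
    refine ⟨by simp, ?_, hW.2.2.infix ⟨P, [], by simp⟩⟩
    intro v hv
    apply hW.2.1
    simp at hv ⊢
    tauto
  obtain ⟨cs₁, hcs₁e, hcs₁b, plan₁⟩ := decompose G (P ++ [i]).length _ le_rfl hW1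
  obtain ⟨cs₂, hcs₂e, hcs₂b, plan₂⟩ := decompose G (i :: Q).length _ le_rfl hW2
  have hL1len : (P ++ [i]).length = P.length + 1 := by simp
  have hL2len : (i :: Q).length = Q.length + 1 := by simp
  set c := circumf G with hc
  set d := cabDiam G with hd
  have hk : 1 + g ≤ cs₁.length + cs₂.length := by
    by_contra hk
    push_neg at hk
    have hkk : cs₁.length + cs₂.length ≤ g := by omega
    have hmul : (c + d) * (cs₁.length + cs₂.length) ≤ (c + d) * g :=
      Nat.mul_le_mul le_rfl hkk
    have eA : (c + d) * (cs₁.length + cs₂.length)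
        = (c + d) * cs₁.length + (c + d) * cs₂.length := by ring
    have eB : (c + d) * g = g * c + g * d := by ring
    have eC : (g + 2) * d = g * d + 2 * d := by ring
    rw [helenW] at hT
    rw [hL1len] at hcs₁b
    rw [hL2len] at hcs₂b
    linarith
  -- pigeonhole on prefix sums of cs₁ ++ cs₂
  have hγpos : 0 < 1 + g := by omega
  obtain ⟨a0, b0, hne, hfe⟩ := Fintype.exists_ne_map_eq_of_card_lt
    (fun a : Fin (1 + g + 1) =>
      (⟨(((cs₁ ++ cs₂).take a).sum) % (1 + g), Nat.mod_lt _ hγpos⟩ : Fin (1 + g)))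
    (by simp)
  obtain ⟨a, b, hab, hbγ, hmod⟩ :
      ∃ a b : ℕ, a < b ∧ b ≤ 1 + g ∧
        (((cs₁ ++ cs₂).take a).sum) % (1 + g) = (((cs₁ ++ cs₂).take b).sum) % (1 + g) := by
    have hfeval : (((cs₁ ++ cs₂).take a0).sum) % (1 + g)
        = (((cs₁ ++ cs₂).take b0).sum) % (1 + g) := congrArg Fin.val hfe
    rcases Nat.lt_or_ge a0.val b0.val with h | h
    · exact ⟨a0, b0, h, Nat.lt_succ_iff.mp b0.isLt, hfeval⟩
    · have h' : b0.val < a0.val := by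
        rcases Nat.lt_or_ge b0.val a0.val with h2 | h2
        · exact h2
        · exact absurd (Fin.ext (le_antisymm h2 h)) hne
      exact ⟨b0, a0, h', Nat.lt_succ_iff.mp a0.isLt, hfeval.symm⟩
  set t := b - a with htdef
  have hteq : a + t = b := by omega
  have htake : (cs₁ ++ cs₂).take b
      = (cs₁ ++ cs₂).take a ++ ((cs₁ ++ cs₂).drop a).take t := by
    rw [← hteq, List.take_add]
  have hS : ((cs₁ ++ cs₂).take b).sum
      = ((cs₁ ++ cs₂).take a).sum + (((cs₁ ++ cs₂).drop a).take t).sum := by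
    rw [htake, List.sum_append]
  have hS0 : (((cs₁ ++ cs₂).drop a).take t).sum ≡ 0 [MOD (1 + g)] := by
    have h1 : ((cs₁ ++ cs₂).take a).sum + (((cs₁ ++ cs₂).drop a).take t).sum
        ≡ ((cs₁ ++ cs₂).take a).sum + 0 [MOD (1 + g)] := by
      unfold Nat.ModEq
      rw [Nat.add_zero, ← hS]
      exact hmod.symm
    exact Nat.ModEq.add_left_cancel' _ h1
  have hcslen : (cs₁ ++ cs₂).length = cs₁.length + cs₂.length := by simp
  have hlenblock : (((cs₁ ++ cs₂).drop a).take t).length = t := by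
    rw [List.length_take, List.length_drop]
    omega
  have hSpos : 1 ≤ (((cs₁ ++ cs₂).drop a).take t).sum := by
    have hl := length_le_sum (l := ((cs₁ ++ cs₂).drop a).take t) ?_
    · omega
    · intro e he
      have hmem : e ∈ cs₁ ++ cs₂ :=
        ((List.take_sublist _ _).trans (List.drop_sublist _ _)).subset he
      rcases List.mem_append.mp hmem with h' | h'
      · exact (hcs₁e e h').1
      · exact (hcs₂e e h').1
  have hsplit2 : ((cs₁ ++ cs₂).drop a).take t
      = (cs₁.drop a).take t ++ (cs₂.drop (a - cs₁.length)).take (t - (cs₁.length - a)) := by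
    rw [List.drop_append, List.take_append, List.length_drop]
  obtain ⟨V₁, hrV₁, hlV₁⟩ := plan₁ a t
  obtain ⟨V₂, hrV₂, hlV₂⟩ := plan₂ (a - cs₁.length) (t - (cs₁.length - a))
  have hSsum : (((cs₁ ++ cs₂).drop a).take t).sum
      = ((cs₁.drop a).take t).sum
        + ((cs₂.drop (a - cs₁.length)).take (t - (cs₁.length - a))).sum := by
    rw [hsplit2, List.sum_append]
  have hwV₁ : IsWalkIn G V₁ := remOnly_walk hrV₁ hW1
  have hwV₂ : IsWalkIn G V₂ := remOnly_walk hrV₂ hW2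
  have hV₁ne : V₁ ≠ [] := hwV₁.1
  have hV₂ne : V₂ ≠ [] := hwV₂.1
  have hV₁last : V₁.getLast? = some i := by
    rw [remOnly_getLast? hrV₁]
    exact List.getLast?_concat
  have hV₁eq : V₁.dropLast ++ [i] = V₁ := by
    have h1 := List.dropLast_append_getLast hV₁ne
    have h2 : V₁.getLast hV₁ne = i := by
      have h3 := List.getLast?_eq_getLast hV₁ne
      rw [hV₁last] at h3
      exact (Option.some_injective _ h3.symm)
    rw [← h2]
    exact h1
  have hstep1 : RemOnly (P ++ i :: Q) (V₁ ++ Q) := by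
    rw [show P ++ i :: Q = (P ++ [i]) ++ Q by simp]
    exact remOnly_append_right hrV₁ Q
  have hstep2 : RemOnly (V₁ ++ Q) (V₁.dropLast ++ V₂) := by
    have h2 : V₁ ++ Q = V₁.dropLast ++ (i :: Q) := by
      rw [← hV₁eq]
      simp
    rw [h2]
    exact remOnly_append_left hrV₂ _
  have hrem : RemOnly (P ++ i :: Q) (V₁.dropLast ++ V₂) := hstep1.trans hstep2
  have hwalkV : IsWalkIn G (V₁.dropLast ++ V₂) := remOnly_walk hrem hW
  have hiV : i ∈ V₁.dropLast ++ V₂ := by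
    have hh : V₂.head? = some i := by
      rw [remOnly_head? hrV₂]
      rfl
    exact List.mem_append_right _ (List.mem_of_mem_head? (by simp [hh]))
  have hVlen : (V₁.dropLast ++ V₂).length = V₁.length - 1 + V₂.length := by
    rw [List.length_append, List.length_dropLast]
  have hV₁pos : 0 < V₁.length := List.length_pos_iff.mpr hV₁ne
  have hV₂pos : 0 < V₂.length := List.length_pos_iff.mpr hV₂ne
  have hWlen : (P ++ i :: Q).length = P.length + Q.length + 1 := by simp; omega
  rw [hL1len] at hlV₁
  rw [hL2len] at hlV₂
  have key : elen (V₁.dropLast ++ V₂) + (((cs₁ ++ cs₂).drop a).take t).sum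
      = elen (P ++ i :: Q) := by
    show (V₁.dropLast ++ V₂).length - 1 + _ = (P ++ i :: Q).length - 1
    omega
  have hmodV : elen (V₁.dropLast ++ V₂) ≡ elen (P ++ i :: Q) [MOD (1 + g)] := by
    have h1 := Nat.ModEq.add_left (elen (V₁.dropLast ++ V₂)) hS0
    rw [key, Nat.add_zero] at h1
    exact h1.symm
  refine ⟨V₁.dropLast ++ V₂, hrem, hwalkV, hiV, remOnly_head? hrem,
    remOnly_getLast? hrem, hmodV, ?_⟩
  have helenV : elen (V₁.dropLast ++ V₂) = (V₁.dropLast ++ V₂).length - 1 := rfl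
  omega

private lemma reduce_to_T {γ : ℕ} (hγ : 1 ≤ γ) {i : Fin n} :
    ∀ (m : ℕ) (W : List (Fin n)), W.length ≤ m → IsWalkIn G W → i ∈ W →
      (γ - 1) * circumf G + (γ + 1) * cabDiam G < elen W →
      ∃ V, RemOnly W V ∧ IsWalkIn G V ∧ i ∈ V ∧ V.head? = W.head? ∧
        V.getLast? = W.getLast? ∧ elen V ≡ elen W [MOD γ] ∧
        elen V ≤ (γ - 1) * circumf G + (γ + 1) * cabDiam G := by
  intro m
  induction m with
  | zero =>
    intro W hm hW _ _
    exact absurd (List.eq_nil_of_length_eq_zero (Nat.le_zero.mp hm)) hW.1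
  | succ m ih =>
    intro W hm hW hiW hT
    obtain ⟨V₁, hr₁, hw₁, hi₁, hh₁, hl₁, hm₁, hlt₁⟩ := round_step hγ hW hiW hT
    by_cases hcase : elen V₁ ≤ (γ - 1) * circumf G + (γ + 1) * cabDiam G
    · exact ⟨V₁, hr₁, hw₁, hi₁, hh₁, hl₁, hm₁, hcase⟩
    · push_neg at hcase
      have hlen₁ : V₁.length ≤ m := by
        have h1 : 0 < V₁.length := List.length_pos_iff.mpr hw₁.1
        have h2 : 0 < W.length := List.length_pos_iff.mpr hW.1
        have h3 : elen V₁ = V₁.length - 1 := rfl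
        have h4 : elen W = W.length - 1 := rfl
        omega
      obtain ⟨V₂, hr₂, hw₂, hi₂, hh₂, hl₂, hm₂, hle₂⟩ := ih V₁ hlen₁ hw₁ hi₁ hcase
      exact ⟨V₂, hr₁.trans hr₂, hw₂, hi₂, hh₂.trans hh₁, hl₂.trans hl₁,
        hm₂.trans hm₁, hle₂⟩

end CycleRemovalAux

/-- `T_cr^γ({i}) ≤ (γ−1)·ĉ(G) + (γ+1)·cd(G)`; concretely,
every walk through `i` of length above this bound can be reduced, by removing
cycles only, to a walk through `i` with the same endpoints and the same length
mod `γ`, of length at most this bound. -/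
theorem cycle_removal_single_node {n : ℕ} (G : SubD n) (i : Fin n) (hi : i ∈ G.verts)
    (γ : ℕ) (hγ : 1 ≤ γ) :
    TcrProp G (singleSub i) γ ((γ - 1) * circumf G + (γ + 1) * cabDiam G)
    ∧ ∀ W, IsWalkIn G W → i ∈ W →
        (γ - 1) * circumf G + (γ + 1) * cabDiam G < elen W →
        ∃ V, RemOnly W V ∧ IsWalkIn G V ∧ i ∈ V ∧
          V.head? = W.head? ∧ V.getLast? = W.getLast? ∧
          elen V ≡ elen W [MOD γ] ∧
          elen V ≤ (γ - 1) * circumf G + (γ + 1) * cabDiam G := by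
  constructor
  · intro W hW hex hTle
    obtain ⟨v, hv, hvW⟩ := hex
    have hvi : v = i := hv
    subst hvi
    rcases eq_or_lt_of_le hTle with he | hlt
    · exact ⟨W, Relation.ReflTransGen.refl, hW, ⟨v, rfl, hvW⟩, rfl, rfl,
        Nat.ModEq.refl _, he ▸ le_rfl⟩
    · obtain ⟨V, hr, hw, hiV, hh, hl, hmd, hleT⟩ :=
        reduce_to_T hγ W.length W le_rfl hW hvW hlt
      exact ⟨V, Relation.ReflTransGen.mono (fun _ _ h => Or.inl h) _ _ hr, hw,
        ⟨v, rfl, hiV⟩, hh, hl, hmd, hleT⟩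
  · intro W hW hiW hlt
    obtain ⟨V, hr, hw, hiV, hh, hl, hmd, hleT⟩ :=
      reduce_to_T hγ W.length W le_rfl hW hiW hlt
    exact ⟨V, hr, hw, hiV, hh, hl, hmd, hleT⟩

end MaxPlus
end
end

section
/- Let G be a finite digraph on n nodes, let C be a cycle of G and let γ ≥ 1 be a divisor of l(C). Then T_cr^γ(C) ≤ (n − 1 − l(C) + γ)·ĉ(G) + cd(G) + l(C), where ĉ(G) is the circumference and cd(G) the cab driver's diameter of G. -/
open Classical

noncomputable section

namespace MaxPlus

section CycleRemovalProof

variable {n : ℕ}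

-- ============ compatibility: the removed `List.get?` API ============

def _root_.List.get? {α : Type*} (l : List α) (i : ℕ) : Option α := l[i]?

theorem _root_.List.get?_eq_getElem? {α : Type*} (l : List α) (i : ℕ) : l.get? i = l[i]? := rfl

theorem _root_.List.get?_eq_get {α : Type*} {l : List α} {i : ℕ} (h : i < l.length) :
    l.get? i = some (l.get ⟨i, h⟩) := by simp [List.get?, h]

theorem _root_.List.get?_eq_none {α : Type*} {l : List α} {i : ℕ} :
    l.get? i = none ↔ l.length ≤ i := by simp [List.get?]

theorem _root_.List.get?_append {α : Type*} {l₁ l₂ : List α} {i : ℕ} (h : i < l₁.length) :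
    (l₁ ++ l₂).get? i = l₁.get? i := by simp [List.get?, List.getElem?_append_left h]

theorem _root_.List.get?_append_right {α : Type*} {l₁ l₂ : List α} {i : ℕ}
    (h : l₁.length ≤ i) : (l₁ ++ l₂).get? i = l₂.get? (i - l₁.length) := by
  simp [List.get?, List.getElem?_append_right h]

theorem _root_.List.get?_take {α : Type*} {l : List α} {k m : ℕ} (h : m < k) :
    (l.take k).get? m = l.get? m := by simp [List.get?, List.getElem?_take, h]

theorem _root_.List.get?_drop {α : Type*} (L : List α) (i j : ℕ) :
    (L.drop i).get? j = L.get? (i + j) := by simp [List.get?]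

theorem _root_.List.getLast?_eq_get? {α : Type*} (l : List α) :
    l.getLast? = l.get? (l.length - 1) := by simp [List.get?, List.getLast?_eq_getElem?]

theorem _root_.List.get?_mem {α : Type*} {l : List α} {i : ℕ} {a : α} (h : l.get? i = some a) :
    a ∈ l := List.mem_of_getElem? h

theorem _root_.List.mem_iff_get? {α : Type*} {a : α} {l : List α} :
    a ∈ l ↔ ∃ i, l.get? i = some a := List.mem_iff_getElem?

theorem _root_.List.get?_map {α β : Type*} (f : α → β) (l : List α) (i : ℕ) :
    (l.map f).get? i = (l.get? i).map f := by simp [List.get?]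

theorem _root_.List.get?_range {m k : ℕ} (h : m < k) : (List.range k).get? m = some m := by
  simp [List.get?, h]

-- ============ generic list helpers ============

private lemma get?_some_of_lt {α : Type*} {l : List α} {i : ℕ} (h : i < l.length) :
    ∃ x, l.get? i = some x := ⟨l.get ⟨i, h⟩, List.get?_eq_get h⟩

private lemma lt_length_of_get?_some {α : Type*} {l : List α} {i : ℕ} {x : α}
    (h : l.get? i = some x) : i < l.length := by
  by_contra hc
  rw [List.get?_eq_none.mpr (by omega)] at h
  exact Option.some_ne_none x h.symm

private lemma chain'_get? {α : Type*} {R : α → α → Prop} {l : List α} (h : l.Chain' R)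
    {i : ℕ} {x y : α} (hx : l.get? i = some x) (hy : l.get? (i + 1) = some y) : R x y := by
  have hi1 : i + 1 < l.length := lt_length_of_get?_some hy
  have hi : i < l.length := by omega
  have hR := List.isChain_iff_getElem.mp h i (by omega)
  rw [List.get?_eq_get hi] at hx
  rw [List.get?_eq_get hi1] at hy
  have ex : l.get ⟨i, hi⟩ = x := Option.some.inj hx
  have ey : l.get ⟨i + 1, hi1⟩ = y := Option.some.inj hy
  rw [← ex, ← ey]
  exact hR

private lemma chain'_of_get? {α : Type*} {R : α → α → Prop} {l : List α}
    (h : ∀ (i : ℕ) (x y : α), l.get? i = some x → l.get? (i + 1) = some y → R x y) :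
    l.Chain' R := by
  refine List.isChain_iff_getElem.mpr ?_
  intro i hi
  exact h i _ _ (List.get?_eq_get (by omega)) (List.get?_eq_get (by omega))

-- ============ the cut operation ============

private def cut (W : List (Fin n)) (s t : ℕ) : List (Fin n) :=
  W.take (s + 1) ++ W.drop (t + 1)

private lemma cut_get?_left {W : List (Fin n)} {s t : ℕ} (hst : s < t) (ht : t < W.length)
    {i : ℕ} (hi : i ≤ s) : (cut W s t).get? i = W.get? i := by
  have hlen : (W.take (s + 1)).length = s + 1 := by
    rw [List.length_take]; omega
  rw [cut, List.get?_append (by omega), List.get?_take (by omega)]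

private lemma cut_get?_right {W : List (Fin n)} {s t : ℕ} (hst : s < t) (ht : t < W.length)
    (i : ℕ) : (cut W s t).get? (s + 1 + i) = W.get? (t + 1 + i) := by
  have hlen : (W.take (s + 1)).length = s + 1 := by
    rw [List.length_take]; omega
  rw [cut, List.get?_append_right (by omega), hlen, List.get?_drop]
  congr 1
  omega

private lemma cut_length {W : List (Fin n)} {s t : ℕ} (hst : s < t) (ht : t < W.length) :
    (cut W s t).length + (t - s) = W.length := by
  rw [cut, List.length_append, List.length_take, List.length_drop]
  omega

private lemma cut_removeStep {W : List (Fin n)} {s t : ℕ} (hst : s < t) (ht : t < W.length)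
    (heq : W.get? s = W.get? t) : RemoveStep W (cut W s t) := by
  have hs : s < W.length := by omega
  obtain ⟨x, hx⟩ := get?_some_of_lt hs
  have hxt : W.get? t = some x := by rw [← heq]; exact hx
  have h1 : W.take (s + 1) = W.take s ++ [x] := by
    have hx' : W[s]? = some x := by rw [← List.get?_eq_getElem?]; exact hx
    rw [List.take_succ, hx']
    rfl
  have h2 : W.take (t + 1) = W.take t ++ [x] := by
    have hx' : W[t]? = some x := by rw [← List.get?_eq_getElem?]; exact hxt
    rw [List.take_succ, hx']
    rfl
  have h3 : W.take t = W.take (s + 1) ++ (W.take t).drop (s + 1) := by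
    have h := List.take_append_drop (s + 1) (W.take t)
    rw [List.take_take, min_eq_left (by omega : s + 1 ≤ t)] at h
    exact h.symm
  refine ⟨W.take s, (W.take t).drop (s + 1), W.drop (t + 1), x, ?_, ?_⟩
  · calc W = W.take (t + 1) ++ W.drop (t + 1) := (List.take_append_drop _ _).symm
      _ = (W.take t ++ [x]) ++ W.drop (t + 1) := by rw [h2]
      _ = ((W.take (s + 1) ++ (W.take t).drop (s + 1)) ++ [x]) ++ W.drop (t + 1) := by
            rw [← h3]
      _ = (((W.take s ++ [x]) ++ (W.take t).drop (s + 1)) ++ [x]) ++ W.drop (t + 1) := by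
            rw [h1]
      _ = W.take s ++ x :: (W.take t).drop (s + 1) ++ x :: W.drop (t + 1) := by
            simp [List.append_assoc]
  · show cut W s t = _
    rw [cut, h1]
    simp [List.append_assoc]

private lemma cut_head? {W : List (Fin n)} {s t : ℕ} (hst : s < t) (ht : t < W.length) :
    (cut W s t).head? = W.head? := by
  rw [cut, List.head?_append]
  cases W with
  | nil => simp at ht
  | cons a l => simp

private lemma cut_getLast? {W : List (Fin n)} {s t : ℕ} (hst : s < t) (ht : t < W.length)
    (heq : W.get? s = W.get? t) : (cut W s t).getLast? = W.getLast? := by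
  rcases Nat.lt_or_ge (t + 1) W.length with h | h
  · have hd : W.drop (t + 1) ≠ [] := by
      intro hcon
      have := congrArg List.length hcon
      rw [List.length_drop] at this
      simp at this
      omega
    rw [cut, List.getLast?_append_of_ne_nil _ hd]
    rw [List.getLast?_eq_get?, List.getLast?_eq_get?, List.length_drop, List.get?_drop]
    congr 1
    omega
  · have hdnil : W.drop (t + 1) = [] := by
      apply List.drop_eq_nil_of_le
      omega
    rw [cut, hdnil, List.append_nil, List.getLast?_eq_get?, List.getLast?_eq_get?,
      List.length_take]
    have h1 : min (s + 1) W.length = s + 1 := by omega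
    rw [h1]
    have h2 : s + 1 - 1 = s := by omega
    rw [h2, List.get?_take (by omega : s < s + 1), heq]
    congr 1
    omega

private lemma cut_subset {W : List (Fin n)} {s t : ℕ} :
    ∀ x ∈ cut W s t, x ∈ W := by
  intro x hx
  rcases List.mem_append.mp hx with h | h
  · exact List.take_subset _ _ h
  · exact List.drop_subset _ _ h

private lemma cut_chain' {E : Fin n → Fin n → Prop} {W : List (Fin n)} {s t : ℕ}
    (hst : s < t) (ht : t < W.length) (heq : W.get? s = W.get? t)
    (h : W.Chain' E) : (cut W s t).Chain' E := by
  apply chain'_of_get?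
  intro i x y hx hy
  rcases Nat.lt_or_ge i s with hi | hi
  · rw [cut_get?_left hst ht (by omega)] at hx
    rw [cut_get?_left hst ht (by omega)] at hy
    exact chain'_get? h hx hy
  rcases Nat.eq_or_lt_of_le hi with hi' | hi'
  · -- i = s
    rw [← hi'] at hx hy
    rw [cut_get?_left hst ht le_rfl] at hx
    have hx' : W.get? t = some x := by rw [← heq]; exact hx
    have hy' : W.get? (t + 1) = some y := by
      have h0 := cut_get?_right hst ht 0
      rw [show s + 1 + 0 = s + 1 by omega, show t + 1 + 0 = t + 1 by omega] at h0
      rw [← h0]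
      exact hy
    exact chain'_get? h hx' hy'
  · obtain ⟨j, rfl⟩ : ∃ j, i = s + 1 + j := ⟨i - (s + 1), by omega⟩
    rw [cut_get?_right hst ht j] at hx
    rw [show s + 1 + j + 1 = s + 1 + (j + 1) by omega, cut_get?_right hst ht (j + 1)] at hy
    have hy' : W.get? (t + 1 + j + 1) = some y := by
      rw [show t + 1 + j + 1 = t + 1 + (j + 1) by omega]
      exact hy
    exact chain'_get? h hx hy'


-- ============ iterated removal of disjoint segments ============

private lemma multiCut {E : Fin n → Fin n → Prop} :
    ∀ (L : List (ℕ × ℕ)) (W : List (Fin n)),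
      (∀ p ∈ L, p.1 < p.2 ∧ p.2 < W.length ∧ W.get? p.1 = W.get? p.2) →
      List.Pairwise (fun p q : ℕ × ℕ => p.2 ≤ q.1) L →
      ∃ V : List (Fin n),
        Relation.ReflTransGen (RemoveStep (n := n)) W V ∧
        V.head? = W.head? ∧ V.getLast? = W.getLast? ∧
        V.length + (L.map fun p => p.2 - p.1).sum = W.length ∧
        (∀ x ∈ V, x ∈ W) ∧
        (W.Chain' E → V.Chain' E) ∧
        (∀ (q : ℕ) (c : Fin n), W.get? q = some c →
          (∀ p ∈ L, p.2 < q ∨ q ≤ p.1) → c ∈ V) := by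
  intro L
  induction L using List.reverseRecOn with
  | nil =>
      intro W _ _
      exact ⟨W, Relation.ReflTransGen.refl, rfl, rfl, by simp, fun _ h => h, fun h => h,
        fun q c hc _ => List.get?_mem hc⟩
  | append_singleton L' p ih =>
      rcases p with ⟨s, t⟩
      intro W hvalid hpair
      obtain ⟨hst, ht, heq⟩ := hvalid (s, t) (by simp)
      have hpairsplit := List.pairwise_append.mp hpair
      have hpair' := hpairsplit.1
      have hbnd : ∀ r ∈ L', r.2 ≤ s := by
        intro r hr
        exact hpairsplit.2.2 r hr (s, t) (by simp)
      have hlen1 : (cut W s t).length + (t - s) = W.length := cut_length hst ht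
      have hvalid' : ∀ r ∈ L', r.1 < r.2 ∧ r.2 < (cut W s t).length ∧
          (cut W s t).get? r.1 = (cut W s t).get? r.2 := by
        intro r hr
        obtain ⟨h1, h2, h3⟩ := hvalid r (by simp [hr])
        have hr2 : r.2 ≤ s := hbnd r hr
        refine ⟨h1, by omega, ?_⟩
        rw [cut_get?_left hst ht (by omega), cut_get?_left hst ht hr2]
        exact h3
      obtain ⟨V, hsteps, hhead, hlast, hlen, hsub, hchain, hmem⟩ := ih (cut W s t) hvalid' hpair'
      refine ⟨V, Relation.ReflTransGen.head (cut_removeStep hst ht heq) hsteps,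
        hhead.trans (cut_head? hst ht),
        hlast.trans (cut_getLast? hst ht heq), ?_,
        fun x hx => cut_subset x (hsub x hx),
        fun hc => hchain (cut_chain' hst ht heq hc), ?_⟩
      · rw [List.map_append, List.sum_append]
        simp only [List.map_cons, List.map_nil, List.sum_cons, List.sum_nil]
        omega
      · intro q c hc havoid
        have havoid' : ∀ r ∈ L', r.2 < q ∨ q ≤ r.1 := fun r hr => havoid r (by simp [hr])
        rcases havoid (s, t) (by simp) with h | h
        · -- t < q
          obtain ⟨j, rfl⟩ : ∃ j, q = t + 1 + j := ⟨q - (t + 1), by omega⟩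
          have hc' : (cut W s t).get? (s + 1 + j) = some c := by
            rw [cut_get?_right hst ht j]; exact hc
          apply hmem _ _ hc'
          intro r hr
          have := hbnd r hr
          left
          omega
        · -- q ≤ s
          have hc' : (cut W s t).get? q = some c := by
            rw [cut_get?_left hst ht h]; exact hc
          exact hmem _ _ hc' havoid'

-- ============ bounds on cabDiam / circumf ============

private lemma elen_path_le {G : SubD n} {p : List (Fin n)} (hp : IsPathIn G p) :
    elen p ≤ cabDiam G := by
  have hne : p ≠ [] := hp.1.1
  have hlen : 1 ≤ p.length := List.length_pos_iff.mpr hne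
  apply le_csSup
  · refine ⟨n, ?_⟩
    rintro l ⟨q, hq, hql⟩
    have h1 : q.length ≤ n := by
      have := hq.2.length_le_card
      simpa [Fintype.card_fin] using this
    omega
  · exact ⟨p, hp, by unfold elen; omega⟩

private lemma elen_cycle_le {G : SubD n} {c : List (Fin n)} (hc : IsCycleIn G c) :
    elen c ≤ circumf G := by
  apply le_csSup
  · refine ⟨n, ?_⟩
    rintro l ⟨q, hq, hql⟩
    have h1 : q.dropLast.length ≤ n := by
      have := hq.2.2.2.length_le_card
      simpa [Fintype.card_fin] using this
    rw [List.length_dropLast] at h1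
    have h2 := hq.2.1
    omega
  · refine ⟨c, hc, ?_⟩
    have := hc.2.1
    unfold elen
    omega

private lemma cabDiam_add_one_le {G : SubD n} {v : Fin n} (hv : v ∈ G.verts) :
    cabDiam G + 1 ≤ n := by
  have hn : 0 < n := v.pos
  have h1 : cabDiam G ≤ n - 1 := by
    apply csSup_le
    · refine ⟨0, [v], ⟨⟨by simp, ?_, List.isChain_singleton v⟩, List.nodup_singleton v⟩, by simp⟩
      intro x hx
      simp at hx
      rw [hx]
      exact hv
    · rintro l ⟨q, hq, hql⟩
      have := hq.2.length_le_card
      simp [Fintype.card_fin] at this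
      omega
  omega

-- ============ window repeats ============

private lemma window_path_repeat {G : SubD n} {W : List (Fin n)} (hW : IsWalkIn G W)
    {a m : ℕ} (hm : a + m ≤ W.length) (hbig : cabDiam G + 2 ≤ m) :
    ∃ s t, a ≤ s ∧ s < t ∧ t < a + m ∧ W.get? s = W.get? t := by
  by_contra hcon
  push_neg at hcon
  set w : List (Fin n) := (W.drop a).take m with hw
  have hwlen : w.length = m := by
    rw [hw, List.length_take, List.length_drop]; omega
  have hwget : ∀ i, i < m → w.get? i = W.get? (a + i) := by
    intro i hi
    rw [hw, List.get?_take (by omega), List.get?_drop]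
  have hnd : w.Nodup := by
    rw [List.Nodup, List.pairwise_iff_get]
    intro i j hij hEq
    have hi : (i : ℕ) < m := by rw [← hwlen]; exact i.isLt
    have hj : (j : ℕ) < m := by rw [← hwlen]; exact j.isLt
    apply hcon (a + (i : ℕ)) (a + (j : ℕ)) (by omega) (by omega) (by omega)
    have h1 : W.get? (a + (i : ℕ)) = some (w.get i) := by
      rw [← hwget _ hi, List.get?_eq_get i.isLt]
    have h2 : W.get? (a + (j : ℕ)) = some (w.get j) := by
      rw [← hwget _ hj, List.get?_eq_get j.isLt]
    rw [h1, h2, hEq]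
  have hpath : IsPathIn G w := by
    refine ⟨⟨?_, ?_, ?_⟩, hnd⟩
    · intro h
      rw [h] at hwlen
      simp at hwlen
      omega
    · intro v hv
      have : v ∈ W := List.drop_subset a W (List.take_subset _ _ hv)
      exact hW.2.1 v this
    · apply chain'_of_get?
      intro i x y hx hy
      have hiy : i + 1 < w.length := lt_length_of_get?_some hy
      rw [hwget i (by omega)] at hx
      rw [hwget (i + 1) (by omega)] at hy
      have hy' : W.get? (a + i + 1) = some y := by
        rw [show a + i + 1 = a + (i + 1) by omega]
        exact hy
      exact chain'_get? hW.2.2 hx hy'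
  have hfin := elen_path_le hpath
  unfold elen at hfin
  omega

private lemma window_pool_repeat {W : List (Fin n)} (P : Finset (Fin n))
    {a m : ℕ} (hm : a + m ≤ W.length)
    (hmem : ∀ i c, a ≤ i → i < a + m → W.get? i = some c → c ∈ P)
    (hbig : P.card < m) :
    ∃ s t, a ≤ s ∧ s < t ∧ t < a + m ∧ W.get? s = W.get? t := by
  have hm1 : 1 ≤ m := by omega
  obtain ⟨c₀, hc₀⟩ := get?_some_of_lt (show a < W.length by omega)
  set f : ℕ → Fin n := fun j => ((W.get? (a + j)).getD c₀) with hf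
  have hfs : ∀ j, j < m → W.get? (a + j) = some (f j) := by
    intro j hj
    obtain ⟨x, hx⟩ := get?_some_of_lt (show a + j < W.length by omega)
    show W.get? (a + j) = some ((W.get? (a + j)).getD c₀)
    rw [hx]
    rfl
  have hmap : ∀ j ∈ Finset.range m, f j ∈ P := by
    intro j hj
    rw [Finset.mem_range] at hj
    exact hmem (a + j) _ (by omega) (by omega) (hfs j hj)
  obtain ⟨i, hi, j, hj, hne, hfeq⟩ :=
    Finset.exists_ne_map_eq_of_card_lt_of_maps_to (by simpa using hbig) hmap
  rw [Finset.mem_range] at hi hj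
  rcases Nat.lt_or_ge i j with h | h
  · exact ⟨a + i, a + j, by omega, by omega, by omega, by rw [hfs i hi, hfs j hj, hfeq]⟩
  · have hji : j < i := by omega
    exact ⟨a + j, a + i, by omega, by omega, by omega, by rw [hfs i hi, hfs j hj, hfeq]⟩

-- ============ master inequality ============

private lemma master_ineq {γ L cd cc A gm : ℕ}
    (hg : γ = gm + 1) (hγL : γ ≤ L) (hLc : L ≤ cc) (hγc : γ ≤ cc) :
    min (cd + 2) (A + 1) + γ * (cd + 2) ≤ (A + gm) * cc + cd + L + 2 ∨
    (¬ (cd + 1 ≤ L + A)) := by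
  by_cases hcd : cd + 1 ≤ L + A
  · left
    have hL1 : 1 ≤ L := le_trans (by omega) hγL
    rcases Nat.le_total (cd + 2) (A + 1) with h | h
    · rw [min_eq_left h]
      have h1 : cd + 1 ≤ A := by omega
      have e1 : γ * (cd + 2) = γ * (cd + 1) + γ := by ring
      have e2 : γ * (cd + 1) ≤ γ * A := Nat.mul_le_mul le_rfl h1
      have e3 : (A + gm) * (gm + 1) ≤ (A + gm) * cc := Nat.mul_le_mul le_rfl (by omega)
      have e4 : (A + gm) * (gm + 1) = γ * A + (gm * gm + gm) := by rw [hg]; ring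
      omega
    · rw [min_eq_right h]
      have e1 : γ * (cd + 2) = gm * (cd + 1) + gm + cd + 2 := by rw [hg]; ring
      have e2 : gm * (cd + 1) ≤ gm * (L + A) := Nat.mul_le_mul le_rfl hcd
      have e3 : gm * (L + A) = gm * L + gm * A := by ring
      have e4 : (A + gm) * L ≤ (A + gm) * cc := Nat.mul_le_mul le_rfl hLc
      have e5 : (A + gm) * L = A * L + gm * L := by ring
      have e6 : (A + 1) * γ ≤ (A + 1) * L := Nat.mul_le_mul le_rfl hγL
      have e7 : (A + 1) * γ = A * gm + A + gm + 1 := by rw [hg]; ring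
      have e8 : (A + 1) * L = A * L + L := by ring
      have e9 : gm * A = A * gm := by ring
      omega
  · right
    exact hcd


-- ============ cycle node count ============

private lemma cycle_toFinset_card {G : SubD n} {C : List (Fin n)} (hC : IsCycleIn G C) :
    C.toFinset.card = elen C := by
  have hne : C ≠ [] := hC.1.1
  have h2 : 2 ≤ C.length := hC.2.1
  have hnd : C.dropLast.Nodup := hC.2.2.2
  have hsplit := List.dropLast_append_getLast hne
  have hhead : C.head? = C.getLast? := hC.2.2.1
  have hlast_mem : C.getLast hne ∈ C.dropLast := by
    have h0 : C.get? 0 = C.head? := by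
      cases C with
      | nil => simp [List.get?]
      | cons a l => rfl
    have hL : C.getLast? = some (C.getLast hne) := List.getLast?_eq_getLast hne
    have hget0 : C.get? 0 = some (C.getLast hne) := by rw [h0, hhead, hL]
    have hd : C.dropLast.get? 0 = some (C.getLast hne) := by
      rw [List.dropLast_eq_take, List.get?_take (by omega)]
      exact hget0
    exact List.get?_mem hd
  have hcard : C.toFinset = C.dropLast.toFinset := by
    conv_lhs => rw [← hsplit]
    rw [List.toFinset_append]
    apply Finset.union_eq_left.mpr
    intro x hx
    simp at hx
    rw [hx, List.mem_toFinset]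
    exact hlast_mem
  rw [hcard, List.toFinset_card_of_nodup hnd, List.length_dropLast]
  rfl

-- ============ the reduction step ============

private lemma reduce_step {G : SubD n} {C : List (Fin n)} (hC : IsCycleIn G C)
    (γ : ℕ) (hγ1 : 1 ≤ γ) (hγdvd : γ ∣ elen C) {W : List (Fin n)}
    (hW : IsWalkIn G W) (hCW : ∃ v ∈ (cycleSub C).verts, v ∈ W)
    (hlong : (n + γ - 1 - elen C) * circumf G + cabDiam G + elen C + 1 ≤ elen W) :
    ∃ V, Relation.ReflTransGen (RemoveStep (n := n)) W V ∧ IsWalkIn G V ∧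
      (∃ v ∈ (cycleSub C).verts, v ∈ V) ∧ V.head? = W.head? ∧ V.getLast? = W.getLast? ∧
      elen V ≡ elen W [MOD γ] ∧ elen V < elen W := by
  classical
  obtain ⟨v₀, hv₀C, hv₀W⟩ := hCW
  have hv₀C' : v₀ ∈ C := hv₀C
  -- basic quantities
  have hL1 : 1 ≤ elen C := by
    have := hC.2.1
    unfold elen
    omega
  have hγL : γ ≤ elen C := Nat.le_of_dvd (by omega) hγdvd
  have hLc : elen C ≤ circumf G := elen_cycle_le hC
  have hcdn : cabDiam G + 1 ≤ n := cabDiam_add_one_le (hC.1.2.1 v₀ hv₀C')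
  have hLn : elen C ≤ n := by
    have h1 : C.dropLast.length ≤ n := by
      have := hC.2.2.2.length_le_card
      simpa [Fintype.card_fin] using this
    rw [List.length_dropLast] at h1
    unfold elen
    omega
  have hWne : W ≠ [] := hW.1
  have hWlen : 1 ≤ W.length := List.length_pos_iff.mpr hWne
  have hNW : W.length = elen W + 1 := by unfold elen; omega
  -- first C-visit
  have hQex : ∃ k, ∃ c, W.get? k = some c ∧ c ∈ C := by
    obtain ⟨k, hk⟩ := List.mem_iff_get?.mp hv₀W
    exact ⟨k, v₀, hk, hv₀C'⟩
  set q := Nat.find hQex with hqdef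
  obtain ⟨cq, hcq, hcqC⟩ := Nat.find_spec hQex
  have hqmin : ∀ k, k < q → ∀ c, W.get? k = some c → c ∉ C := by
    intro k hk c hkc hcC
    exact Nat.find_min hQex hk ⟨c, hkc, hcC⟩
  have hqlt : q < W.length := lt_length_of_get?_some hcq
  -- pool of non-C nodes
  set P : Finset (Fin n) := C.toFinsetᶜ with hPdef
  have hPcard : P.card = n - elen C := by
    rw [hPdef, Finset.card_compl, Fintype.card_fin, cycle_toFinset_card hC]
  -- block sizes
  set bL := min (cabDiam G + 2) (n - elen C + 1) with hbLdef
  set bR := cabDiam G + 2 with hbRdef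
  have hbL1 : 1 ≤ bL := by rw [hbLdef]; omega
  have hbLR : bL ≤ bR := by rw [hbLdef, hbRdef]; omega
  set kL := q / bL with hkLdef
  set kR := (elen W - q) / bR with hkRdef
  obtain ⟨gm, hgm⟩ : ∃ gm, γ = gm + 1 := ⟨γ - 1, by omega⟩
  obtain ⟨A, hA⟩ : ∃ A, n = elen C + A := ⟨n - elen C, by omega⟩
  have hAeq : n - elen C = A := by omega
  have hTeq : n + γ - 1 - elen C = A + gm := by omega
  -- at least γ blocks
  have hblocks : γ ≤ kL + kR := by
    by_contra hcon
    push_neg at hcon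
    have hmod1 := Nat.mod_lt q (show 0 < bL by omega)
    have hdiv1 := Nat.div_add_mod q bL
    have hmod2 := Nat.mod_lt (elen W - q) (show 0 < bR by omega)
    have hdiv2 := Nat.div_add_mod (elen W - q) bR
    rw [← hkLdef] at hdiv1
    rw [← hkRdef] at hdiv2
    have hqN : q ≤ elen W := by omega
    have e1 : bL * kL ≤ bR * kL := Nat.mul_le_mul hbLR le_rfl
    have e2 : bR * kL + bR * kR = bR * (kL + kR) := by ring
    have e3 : bR * (kL + kR) ≤ bR * gm := Nat.mul_le_mul le_rfl (by omega)
    have e4 : bR * gm + bR = bR * γ := by rw [hgm]; ring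
    have e5 : bR * γ = γ * bR := by ring
    -- so elen W + 2 ≤ bL + γ * bR
    have hNbound : elen W + 2 ≤ bL + γ * bR := by omega
    have hmaster := master_ineq hgm hγL hLc (le_trans hγL hLc)
      (L := elen C) (cd := cabDiam G) (A := A)
    have hm2 : bL + γ * bR ≤ (n + γ - 1 - elen C) * circumf G + cabDiam G + elen C + 2 := by
      rcases hmaster with hm | hm
      · have hbl : bL = min (cabDiam G + 2) (A + 1) := by
          rw [hbLdef, hAeq]
        rw [hbl, hbRdef, hTeq]
        exact hm
      · omega
    omega
  -- left block repeats
  have hLeft : ∀ j, j < kL → ∃ s t, (j * bL ≤ s) ∧ (s < t) ∧ (t < j * bL + bL) ∧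
      (t < q) ∧ (W.get? s = W.get? t) := by
    intro j hj
    have hend : j * bL + bL ≤ q := by
      have h1 : (j + 1) * bL ≤ kL * bL := Nat.mul_le_mul (by omega) le_rfl
      have h2 : kL * bL ≤ q := by
        rw [hkLdef]
        exact Nat.div_mul_le_self q bL
      have h3 : (j + 1) * bL = j * bL + bL := by ring
      omega
    have hwin : j * bL + bL ≤ W.length := by omega
    rcases Nat.le_total (cabDiam G + 2) (n - elen C + 1) with hmin | hmin
    · have hbL : bL = cabDiam G + 2 := by rw [hbLdef]; omega
      obtain ⟨s, t, h1, h2, h3, h4⟩ := window_path_repeat hW hwin (by omega)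
      exact ⟨s, t, h1, h2, h3, by omega, h4⟩
    · have hbL : bL = n - elen C + 1 := by rw [hbLdef]; omega
      have hpool : ∀ i c, j * bL ≤ i → i < j * bL + bL → W.get? i = some c → c ∈ P := by
        intro i c hi1 hi2 hic
        have hnotC : c ∉ C := hqmin i (by omega) c hic
        rw [hPdef]
        simp only [Finset.mem_compl, List.mem_toFinset]
        exact hnotC
      obtain ⟨s, t, h1, h2, h3, h4⟩ := window_pool_repeat P hwin hpool (by rw [hPcard]; omega)
      exact ⟨s, t, h1, h2, h3, by omega, h4⟩
  choose fs ft hf1 hf2 hf3 hf4 hf5 using hLeft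
  -- right block repeats
  have hRight : ∀ j, j < kR → ∃ s t, ((q + 1) + j * bR ≤ s) ∧ (s < t) ∧
      (t < (q + 1) + j * bR + bR) ∧ (t < W.length) ∧ (W.get? s = W.get? t) := by
    intro j hj
    have hend : (q + 1) + j * bR + bR ≤ W.length := by
      have h1 : (j + 1) * bR ≤ kR * bR := Nat.mul_le_mul (by omega) le_rfl
      have h2 : kR * bR ≤ elen W - q := by
        rw [hkRdef]
        exact Nat.div_mul_le_self _ _
      have h3 : (j + 1) * bR = j * bR + bR := by ring
      omega
    obtain ⟨s, t, h1, h2, h3, h4⟩ := window_path_repeat hW hend (by omega)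
    exact ⟨s, t, h1, h2, h3, by omega, h4⟩
  choose gs gt hg1 hg2 hg3 hg4 hg5 using hRight
  -- the list of γ segments
  set seg : ℕ → ℕ × ℕ := fun j =>
    if h : j < kL then (fs j h, ft j h)
    else if h' : j - kL < kR then (gs (j - kL) h', gt (j - kL) h') else (0, 0) with hsegdef
  set SEGS : List (ℕ × ℕ) := (List.range γ).map seg with hSEGSdef
  have hSEGSlen : SEGS.length = γ := by rw [hSEGSdef]; simp
  have hsegprop : ∀ j, j < γ → (seg j).1 < (seg j).2 ∧ (seg j).2 < W.length ∧
      W.get? (seg j).1 = W.get? (seg j).2 ∧ ((seg j).2 < q ∨ q + 1 ≤ (seg j).1) := by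
    intro j hj
    by_cases h : j < kL
    · rw [hsegdef]
      simp only [dif_pos h]
      refine ⟨hf2 j h, by have := hf4 j h; omega, hf5 j h, Or.inl (hf4 j h)⟩
    · have h' : j - kL < kR := by omega
      rw [hsegdef]
      simp only [dif_neg h, dif_pos h']
      refine ⟨hg2 _ h', hg4 _ h', hg5 _ h', Or.inr (by have := hg1 _ h'; omega)⟩
  have hmemSEGS : ∀ p ∈ SEGS, p.1 < p.2 ∧ p.2 < W.length ∧ W.get? p.1 = W.get? p.2 := by
    intro p hp
    rw [hSEGSdef, List.mem_map] at hp
    obtain ⟨j, hj, rfl⟩ := hp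
    rw [List.mem_range] at hj
    exact ⟨(hsegprop j hj).1, (hsegprop j hj).2.1, (hsegprop j hj).2.2.1⟩
  have havoidSEGS : ∀ p ∈ SEGS, p.2 < q ∨ q ≤ p.1 := by
    intro p hp
    rw [hSEGSdef, List.mem_map] at hp
    obtain ⟨j, hj, rfl⟩ := hp
    rw [List.mem_range] at hj
    rcases (hsegprop j hj).2.2.2 with h | h
    · exact Or.inl h
    · exact Or.inr (by omega)
  have hordSEGS : SEGS.Pairwise (fun p q' : ℕ × ℕ => p.2 ≤ q'.1) := by
    have hgets : ∀ (i : ℕ) (hi : i < SEGS.length), SEGS.get ⟨i, hi⟩ = seg i := by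
      intro i hi
      have hi' : i < γ := by rw [← hSEGSlen]; exact hi
      have hsome : SEGS.get? i = some (seg i) := by
        rw [hSEGSdef, List.get?_map, List.get?_range hi']
        rfl
      rw [List.get?_eq_get hi] at hsome
      exact Option.some.inj hsome
    rw [List.pairwise_iff_get]
    intro i j hij
    rw [hgets i i.isLt, hgets j j.isLt]
    have hjγ : (j : ℕ) < γ := by rw [← hSEGSlen]; exact j.isLt
    have hij' : (i : ℕ) < (j : ℕ) := hij
    by_cases hi : (i : ℕ) < kL
    · by_cases hj : (j : ℕ) < kL
      · rw [hsegdef]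
        simp only [dif_pos hi, dif_pos hj]
        have e1 : ((i : ℕ) + 1) * bL ≤ (j : ℕ) * bL := Nat.mul_le_mul (by omega) le_rfl
        have e2 : ((i : ℕ) + 1) * bL = (i : ℕ) * bL + bL := by ring
        have h3 := hf3 _ hi
        have h1 := hf1 _ hj
        omega
      · have hj' : (j : ℕ) - kL < kR := by omega
        rw [hsegdef]
        simp only [dif_pos hi, dif_neg hj, dif_pos hj']
        have h4 := hf4 _ hi
        have hg := hg1 _ hj'
        omega
    · have hj : ¬ (j : ℕ) < kL := by omega
      have hi' : (i : ℕ) - kL < kR := by omega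
      have hj' : (j : ℕ) - kL < kR := by omega
      rw [hsegdef]
      simp only [dif_neg hi, dif_neg hj, dif_pos hi', dif_pos hj']
      have e1 : (((i : ℕ) - kL) + 1) * bR ≤ ((j : ℕ) - kL) * bR :=
        Nat.mul_le_mul (by omega) le_rfl
      have e2 : (((i : ℕ) - kL) + 1) * bR = ((i : ℕ) - kL) * bR + bR := by ring
      have h3 := hg3 _ hi'
      have h1 := hg1 _ hj'
      omega
  -- prefix-sum pigeonhole
  set lenf : ℕ × ℕ → ℕ := fun p => p.2 - p.1 with hlenfdef
  set F : ℕ → ℕ := fun j => ((SEGS.take j).map lenf).sum with hFdef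
  have hpig : ∃ a b, a < b ∧ b ≤ γ ∧ F a % γ = F b % γ := by
    have hmap : ∀ j ∈ Finset.range (γ + 1), F j % γ ∈ Finset.range γ := by
      intro j _
      rw [Finset.mem_range]
      exact Nat.mod_lt _ (by omega)
    obtain ⟨a, ha, b, hb, hne, heqm⟩ :=
      Finset.exists_ne_map_eq_of_card_lt_of_maps_to (by simp) hmap
    rw [Finset.mem_range] at ha hb
    rcases Nat.lt_or_ge a b with h | h
    · exact ⟨a, b, h, by omega, heqm⟩
    · exact ⟨b, a, by omega, by omega, heqm.symm⟩
  obtain ⟨a, b, hab, hbγ, hFeq⟩ := hpig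
  set RUN : List (ℕ × ℕ) := (SEGS.drop a).take (b - a) with hRUNdef
  have hsplit : SEGS.take b = SEGS.take a ++ RUN := by
    rw [hRUNdef, ← List.take_add]
    congr 1
    omega
  have hFb : F b = F a + (RUN.map lenf).sum := by
    rw [hFdef]
    show ((SEGS.take b).map lenf).sum = ((SEGS.take a).map lenf).sum + (RUN.map lenf).sum
    rw [hsplit, List.map_append, List.sum_append]
  have hdvd : γ ∣ (RUN.map lenf).sum := by
    have hmodeq : F a ≡ F a + (RUN.map lenf).sum [MOD γ] := by
      rw [← hFb]
      exact hFeq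
    have h0 : (0 : ℕ) ≡ (RUN.map lenf).sum [MOD γ] := by
      apply Nat.ModEq.add_left_cancel' (F a)
      rw [Nat.add_zero]
      exact hmodeq
    exact Nat.modEq_zero_iff_dvd.mp h0.symm
  have hRUNsub : RUN.Sublist SEGS := by
    rw [hRUNdef]
    exact (List.take_sublist _ _).trans (List.drop_sublist _ _)
  have hRUNlen : RUN.length = b - a := by
    rw [hRUNdef, List.length_take, List.length_drop, hSEGSlen]
    omega
  have hRUNvalid : ∀ p ∈ RUN, p.1 < p.2 ∧ p.2 < W.length ∧ W.get? p.1 = W.get? p.2 :=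
    fun p hp => hmemSEGS p (hRUNsub.subset hp)
  have hRUNavoid : ∀ p ∈ RUN, p.2 < q ∨ q ≤ p.1 :=
    fun p hp => havoidSEGS p (hRUNsub.subset hp)
  have hRUNord : RUN.Pairwise (fun p q' : ℕ × ℕ => p.2 ≤ q'.1) :=
    List.Pairwise.sublist hRUNsub hordSEGS
  -- perform the removals
  obtain ⟨V, hsteps, hhead, hlast, hlen, hsub, hchain, hmem⟩ :=
    multiCut (E := G.edge) RUN W hRUNvalid hRUNord
  have hsumpos : 1 ≤ (RUN.map lenf).sum := by
    have hne : RUN ≠ [] := by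
      intro h
      rw [h] at hRUNlen
      simp at hRUNlen
      omega
    obtain ⟨p, hp⟩ := List.exists_mem_of_ne_nil RUN hne
    have h1 := (hRUNvalid p hp).1
    calc 1 ≤ lenf p := by rw [hlenfdef]; simp; omega
      _ ≤ (RUN.map lenf).sum := List.single_le_sum (by simp) _ (List.mem_map_of_mem hp)
  have hVne : V ≠ [] := by
    intro h
    rw [h] at hhead
    cases W with
    | nil => exact hWne rfl
    | cons w ws => simp at hhead
  have hVlen : 1 ≤ V.length := List.length_pos_iff.mpr hVne
  have hlen' : V.length + (RUN.map lenf).sum = W.length := hlen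
  have helen : elen W = elen V + (RUN.map lenf).sum := by
    unfold elen
    omega
  obtain ⟨k, hk⟩ := hdvd
  refine ⟨V, hsteps, ⟨hVne, fun x hx => hW.2.1 x (hsub x hx), hchain hW.2.2⟩,
    ⟨cq, hcqC, ?_⟩, hhead, hlast, ?_, by omega⟩
  · exact hmem q cq hcq hRUNavoid
  · show elen V % γ = elen W % γ
    rw [helen, hk, Nat.add_mul_mod_self_left]


end CycleRemovalProof

/-- For a cycle `C` of `G` and `γ` a divisor of `l(C)`,
`T_cr^γ(C) ≤ (n − 1 − l(C) + γ)·ĉ(G) + cd(G) + l(C)`. -/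
theorem cycle_removal_cycle {n : ℕ} (G : SubD n) (C : List (Fin n))
    (hC : IsCycleIn G C) (γ : ℕ) (hγ1 : 1 ≤ γ) (hγ : γ ∣ elen C) :
    TcrProp G (cycleSub C) γ ((n + γ - 1 - elen C) * circumf G + cabDiam G + elen C) := by
  classical
  set T := (n + γ - 1 - elen C) * circumf G + cabDiam G + elen C with hT
  suffices H : ∀ (m : ℕ) (W : List (Fin n)), elen W ≤ m → IsWalkIn G W →
      (∃ v ∈ (cycleSub C).verts, v ∈ W) →
      ∃ V, RemIns (cycleSub C) W V ∧ IsWalkIn G V ∧ (∃ v ∈ (cycleSub C).verts, v ∈ V) ∧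
        V.head? = W.head? ∧ V.getLast? = W.getLast? ∧ elen V ≡ elen W [MOD γ] ∧ elen V ≤ T by
    intro W hW hCW _
    exact H (elen W) W le_rfl hW hCW
  intro m
  induction m with
  | zero =>
      intro W h0 hW hCW
      exact ⟨W, Relation.ReflTransGen.refl, hW, hCW, rfl, rfl, Nat.ModEq.refl _, by omega⟩
  | succ m ih =>
      intro W hm hW hCW
      by_cases hle : elen W ≤ T
      · exact ⟨W, Relation.ReflTransGen.refl, hW, hCW, rfl, rfl, Nat.ModEq.refl _, hle⟩
      · obtain ⟨V₀, hsteps, hwalk, hmem, hhead, hlast, hmod, hlt⟩ :=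
          reduce_step hC γ hγ1 hγ hW hCW (by omega)
        obtain ⟨V, hVsteps, hVwalk, hVmem, hVhead, hVlast, hVmod, hVle⟩ :=
          ih V₀ (by omega) hwalk hmem
        refine ⟨V, ?_, hVwalk, hVmem, hVhead.trans hhead, hVlast.trans hlast,
          hVmod.trans hmod, hVle⟩
        exact Relation.ReflTransGen.trans
          (Relation.ReflTransGen.mono (fun a b h => Or.inl h) _ _ hsteps) hVsteps


end MaxPlus
end
end

section
/- Let G be a finite digraph, γ ≥ 1 an integer, and W a walk from i to j in G. Then there exists a walk W′ from i to j obtained from W by removing cycles such that l(W′) ≡ l(W) (mod γ) and every node of G appears at most γ times in the node sequence of W′. -/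
open Classical

noncomputable section

namespace MaxPlus


private lemma count_eq_card_filter' {α : Type*} [DecidableEq α] (l : List α) (v : α) :
    l.count v = (Finset.univ.filter fun i : Fin l.length => l.get i = v).card := by
  have := Fin.card_filter_univ_eq_vector_get_eq_count v (⟨l, rfl⟩ : List.Vector α l.length)
  simp [List.Vector.get, List.Vector.toList] at this ⊢
  rw [← this]
  congr 1

private lemma chain'_remove {n : ℕ} (G : SubD n) (pre mid post : List (Fin n)) (x : Fin n)
    (hch : (pre ++ x :: mid ++ x :: post).Chain' G.edge) :
    (pre ++ x :: post).Chain' G.edge := by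
  unfold List.Chain' at hch ⊢
  rw [List.isChain_append] at hch ⊢
  obtain ⟨h1, h2, h3⟩ := hch
  rw [List.isChain_append] at h1
  refine ⟨h1.1, h2, ?_⟩
  intro a ha b hb
  simp only [List.head?_cons, Option.mem_some_iff] at hb
  exact h1.2.2 a ha b (by simp [hb])

private lemma remOnly_aux {n : ℕ} (G : SubD n) (γ : ℕ) (hγ : 1 ≤ γ) :
    ∀ L (W : List (Fin n)), W.length ≤ L → IsWalkIn G W →
    ∃ W', RemOnly W W' ∧ IsWalkIn G W' ∧ W'.head? = W.head? ∧
      W'.getLast? = W.getLast? ∧ elen W' ≡ elen W [MOD γ] ∧ ∀ v : Fin n, W'.count v ≤ γ := by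
  intro L
  induction L with
  | zero =>
    intro W hlen hW
    exact absurd (List.length_eq_zero_iff.mp (Nat.le_zero.mp hlen)) hW.1
  | succ L ih =>
    intro W hlen hW
    by_cases hall : ∀ v : Fin n, W.count v ≤ γ
    · exact ⟨W, Relation.ReflTransGen.refl, hW, rfl, rfl, Nat.ModEq.refl _, hall⟩
    push_neg at hall
    obtain ⟨v, hv⟩ := hall
    have hcard : (Finset.range γ).card <
        (Finset.univ.filter fun i : Fin W.length => W.get i = v).card := by
      rw [Finset.card_range, ← count_eq_card_filter']; exact hv
    obtain ⟨p, hp, q, hq, hne, hpq⟩ :=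
      Finset.exists_ne_map_eq_of_card_lt_of_maps_to hcard
        (fun (i : Fin W.length) _ => Finset.mem_range.mpr (Nat.mod_lt _ hγ))
    simp only [Finset.mem_filter, Finset.mem_univ, true_and] at hp hq
    obtain ⟨A, B, hAlt, hBlt, hab, hmod, hga, hgb⟩ :
        ∃ A B : ℕ, ∃ (hA : A < W.length) (hB : B < W.length), A < B ∧ A % γ = B % γ ∧
          W.get ⟨A, hA⟩ = v ∧ W.get ⟨B, hB⟩ = v := by
      rcases hne.lt_or_gt with h | h
      · exact ⟨p, q, p.isLt, q.isLt, h, hpq, hp, hq⟩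
      · exact ⟨q, p, q.isLt, p.isLt, h, hpq.symm, hq, hp⟩
    set pre := W.take A with hpre
    set mid := (W.drop (A + 1)).take (B - (A + 1)) with hmid
    set post := W.drop (B + 1) with hpost
    clear_value pre mid post
    have hgA : W[A] = v := hga
    have hgB : W[B] = v := hgb
    have hdropB : W.drop B = v :: post := by
      rw [List.drop_eq_getElem_cons hBlt, hpost, hgB]
    have e2 : W.drop (A + 1) = mid ++ v :: post := by
      conv_lhs => rw [← List.take_append_drop (B - (A + 1)) (W.drop (A + 1))]
      rw [← hmid, ← hdropB, List.drop_drop]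
      congr 2
      omega
    have hdec : W = pre ++ v :: mid ++ v :: post := by
      conv_lhs => rw [← List.take_append_drop A W]
      rw [← hpre, List.drop_eq_getElem_cons hAlt, e2, hgA]
      simp
    have hmidlen : mid.length = B - (A + 1) := by
      rw [hmid, List.length_take, List.length_drop]
      omega
    have hstep : RemoveStep W (pre ++ v :: post) := ⟨pre, mid, post, v, hdec, rfl⟩
    have hVwalk : IsWalkIn G (pre ++ v :: post) := by
      refine ⟨by simp, ?_, ?_⟩
      · intro u hu
        apply hW.2.1 u
        rw [hdec]
        simp only [List.mem_append, List.mem_cons] at hu ⊢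
        tauto
      · exact chain'_remove G pre mid post v (hdec ▸ hW.2.2)
    have hVlen : (pre ++ v :: post).length + (B - A) = W.length := by
      rw [hdec]
      simp only [List.length_append, List.length_cons]
      omega
    obtain ⟨W', hrem, hwalk', hh, hl, hmd, hcnt⟩ := ih (pre ++ v :: post) (by omega) hVwalk
    refine ⟨W', Relation.ReflTransGen.head hstep hrem, hwalk', ?_, ?_, ?_, hcnt⟩
    · rw [hh, hdec]
      cases pre <;> simp
    · rw [hl, hdec, List.getLast?_append_cons, List.getLast?_append_cons]
    · have hV1 : 0 < (pre ++ v :: post).length := List.length_pos_iff.mpr (by simp)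
      have hdvd : γ ∣ (B - A) := (Nat.modEq_iff_dvd' (le_of_lt hab)).mp hmod
      have he : elen (pre ++ v :: post) + (B - A) = elen W := by
        unfold elen
        omega
      have h2 : elen (pre ++ v :: post) ≡ elen W [MOD γ] := by
        rw [← he]
        exact (Nat.modEq_iff_dvd' (Nat.le_add_right _ _)).mpr (by simpa using hdvd)
      exact hmd.trans h2

/-- Every walk `W` from `i` to `j` can be reduced, by
removing cycles, to a walk `W'` from `i` to `j` with `l(W') ≡ l(W) (mod γ)` in
which every node appears at most `γ` times. -/
theorem remove_cycles_count_le {n : ℕ} (G : SubD n) (γ : ℕ) (hγ : 1 ≤ γ)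
    (i j : Fin n) (W : List (Fin n)) (hW : IsWalkIn G W)
    (hi : W.head? = some i) (hj : W.getLast? = some j) :
    ∃ W', RemOnly W W' ∧ IsWalkIn G W' ∧
      W'.head? = some i ∧ W'.getLast? = some j ∧
      elen W' ≡ elen W [MOD γ] ∧ ∀ v : Fin n, W'.count v ≤ γ := by
  obtain ⟨W', h1, h2, h3, h4, h5, h6⟩ := remOnly_aux G γ hγ W.length W le_rfl hW
  exact ⟨W', h1, h2, h3.trans hi, h4.trans hj, h5, h6⟩

end MaxPlus
end
end
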